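/- arXiv:1404.3339 — 3 statements merged into one kernel-verified Lean document; each statement's English description precedes it below -/
import Mathlib

section
/- Let P be an SP-graded Kantor pair over 𝕂. Define the reflection P̌ by P̌^σ = P₀^{−σ} ⊕ P₁^σ (σ = ±) with σ-product {a₀ + a₁, b₀ + b₁, c₀ + c₁}^∨ = {a₀, b₀, c₀} − {b₁, a₁, c₀} + K(a₀, b₁)c₁ + {a₁, b₁, c₁} − {b₀, a₀, c₁} + K(a₁, b₀)c₀, where a₀, c₀ ∈ P₀^{−σ}, a₁, c₁ ∈ P₁^σ, b₀ ∈ P₀^σ, b₁ ∈ P₁^{−σ}, and the products and K-operators on the right are those of P. Then P̌ is a Kantor pair, and setting P̌₀^σ = P₀^{−σ}, P̌₁^σ = P₁^σ defines an SP-grading of P̌. -/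
/-- A Kantor pair over `K`: a pair of modules `(Pm, Pp)` (for `P⁻`, `P⁺`) with trilinear
products `tm : P⁻ × P⁺ × P⁻ → P⁻` and `tp : P⁺ × P⁻ × P⁺ → P⁺` satisfying the Kantor
identities (K1) and (K2). -/
structure KantorPair (K : Type*) [CommRing K] (Pm Pp : Type*)
    [AddCommGroup Pm] [AddCommGroup Pp] [Module K Pm] [Module K Pp] where
  tm : Pm → Pp → Pm → Pm
  tp : Pp → Pm → Pp → Pp
  tm_add₁ : ∀ x x' y z, tm (x + x') y z = tm x y z + tm x' y z
  tm_smul₁ : ∀ (a : K) x y z, tm (a • x) y z = a • tm x y z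
  tm_add₂ : ∀ x y y' z, tm x (y + y') z = tm x y z + tm x y' z
  tm_smul₂ : ∀ (a : K) x y z, tm x (a • y) z = a • tm x y z
  tm_add₃ : ∀ x y z z', tm x y (z + z') = tm x y z + tm x y z'
  tm_smul₃ : ∀ (a : K) x y z, tm x y (a • z) = a • tm x y z
  tp_add₁ : ∀ x x' y z, tp (x + x') y z = tp x y z + tp x' y z
  tp_smul₁ : ∀ (a : K) x y z, tp (a • x) y z = a • tp x y z
  tp_add₂ : ∀ x y y' z, tp x (y + y') z = tp x y z + tp x y' z
  tp_smul₂ : ∀ (a : K) x y z, tp x (a • y) z = a • tp x y z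
  tp_add₃ : ∀ x y z z', tp x y (z + z') = tp x y z + tp x y z'
  tp_smul₃ : ∀ (a : K) x y z, tp x y (a • z) = a • tp x y z
  k1m : ∀ (x z u : Pm) (y w : Pp),
    tm x y (tm z w u) - tm z w (tm x y u) = tm (tm x y z) w u - tm z (tp y x w) u
  k1p : ∀ (x z u : Pp) (y w : Pm),
    tp x y (tp z w u) - tp z w (tp x y u) = tp (tp x y z) w u - tp z (tm y x w) u
  k2m : ∀ (x z u : Pm) (w v : Pp),
    (tm x (tp w u v) z - tm z (tp w u v) x) + tm u w (tm x v z - tm z v x)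
      = tm (tm x w z - tm z w x) v u - tm u v (tm x w z - tm z w x)
  k2p : ∀ (x z u : Pp) (w v : Pm),
    (tp x (tm w u v) z - tp z (tm w u v) x) + tp u w (tp x v z - tp z v x)
      = tp (tp x w z - tp z w x) v u - tp u v (tp x w z - tp z w x)

namespace KantorPair

variable {K : Type*} [CommRing K] {Pm Pp : Type*}
  [AddCommGroup Pm] [AddCommGroup Pp] [Module K Pm] [Module K Pp]

/-- `Q = (Qm, Qp)` is an ideal of the Kantor pair:
`{P,P,Q} + {P,Q,P} + {Q,P,P} ⊆ Q` on each side. -/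
def IsIdealPair (KP : KantorPair K Pm Pp) (Qm : Submodule K Pm) (Qp : Submodule K Pp) : Prop :=
  (∀ (x z : Pm) (y : Pp) (q : Pm), q ∈ Qm → KP.tm x y q ∈ Qm ∧ KP.tm q y z ∈ Qm) ∧
  (∀ (x z : Pm) (r : Pp), r ∈ Qp → KP.tm x r z ∈ Qm) ∧
  (∀ (x z : Pp) (y : Pm) (q : Pp), q ∈ Qp → KP.tp x y q ∈ Qp ∧ KP.tp q y z ∈ Qp) ∧
  (∀ (x z : Pp) (r : Pm), r ∈ Qm → KP.tp x r z ∈ Qp)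

/-- A Kantor pair is simple if some product is nonzero and its only ideals are `0` and `P`. -/
def IsSimplePair (KP : KantorPair K Pm Pp) : Prop :=
  ((∃ x y z, KP.tm x y z ≠ 0) ∨ (∃ x y z, KP.tp x y z ≠ 0)) ∧
  ∀ Qm Qp, KP.IsIdealPair Qm Qp → (Qm = ⊥ ∧ Qp = ⊥) ∨ (Qm = ⊤ ∧ Qp = ⊤)

/-- `(ωm, ωp)` belongs to the centroid of the Kantor pair. -/
def InCentroid (KP : KantorPair K Pm Pp) (ωm : Pm →ₗ[K] Pm) (ωp : Pp →ₗ[K] Pp) : Prop :=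
  (∀ x y z, ωm (KP.tm x y z) = KP.tm (ωm x) y z ∧
      ωm (KP.tm x y z) = KP.tm x (ωp y) z ∧ ωm (KP.tm x y z) = KP.tm x y (ωm z)) ∧
  (∀ x y z, ωp (KP.tp x y z) = KP.tp (ωp x) y z ∧
      ωp (KP.tp x y z) = KP.tp x (ωm y) z ∧ ωp (KP.tp x y z) = KP.tp x y (ωp z))

/-- The Kantor pair is central: `a ↦ (a • id, a • id)` is an isomorphism of `K`
onto the centroid. -/
def IsCentralPair (KP : KantorPair K Pm Pp) : Prop :=
  (∀ ωm ωp, KP.InCentroid ωm ωp →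
    ∃ a : K, ωm = a • (LinearMap.id : Pm →ₗ[K] Pm) ∧ ωp = a • (LinearMap.id : Pp →ₗ[K] Pp)) ∧
  ∀ a : K, a • (LinearMap.id : Pm →ₗ[K] Pm) = 0 →
    a • (LinearMap.id : Pp →ₗ[K] Pp) = 0 → a = 0

/-- A Jordan pair is a Kantor pair with vanishing K-operators, i.e. symmetric products. -/
def IsJordanPair (KP : KantorPair K Pm Pp) : Prop :=
  (∀ (x z : Pm) (y : Pp), KP.tm x y z = KP.tm z y x) ∧
  (∀ (x z : Pp) (y : Pm), KP.tp x y z = KP.tp z y x)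

end KantorPair

/-- A 5-grading (= BC₁-grading) of a Lie algebra `L` over `K`:
an internal direct sum decomposition `L = ⊕_{i ∈ ℤ} L_i` with `⁅L_i, L_j⁆ ⊆ L_{i+j}`
and `L_i = 0` for `|i| > 2`. -/
structure FiveGrading (K : Type*) [CommRing K] (L : Type*) [LieRing L] [LieAlgebra K L] where
  g : ℤ → Submodule K L
  internal : DirectSum.IsInternal g
  lie_mem : ∀ (i j : ℤ) (x y : L), x ∈ g i → y ∈ g j → ⁅x, y⁆ ∈ g (i + j)
  vanish : ∀ i : ℤ, 2 < |i| → g i = ⊥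

/-- `T_L(P) = L_{-1} ⊕ L_1` as a submodule of `L`. -/
def Tsub {K : Type*} [CommRing K] {L : Type*} [LieRing L] [LieAlgebra K L]
    (fg : FiveGrading K L) : Submodule K L :=
  fg.g (-1) ⊔ fg.g 1

/-- The span of all brackets `⁅x, y⁆` with `x ∈ U`, `y ∈ V`. -/
def brkSpan (K : Type*) [CommRing K] {L : Type*} [LieRing L] [LieAlgebra K L]
    (U V : Submodule K L) : Submodule K L :=
  Submodule.span K {w : L | ∃ x ∈ U, ∃ y ∈ V, w = ⁅x, y⁆}

/-- A 5-graded Lie algebra `L` tightly envelops the Kantor pair `(L_{-1}, L_1)` if it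
is generated as a Lie algebra by `T = L_{-1} ⊕ L_1` and `Z(L) ∩ [T, T] = 0`. -/
def Tight (K : Type*) [CommRing K] {L : Type*} [LieRing L] [LieAlgebra K L]
    (fg : FiveGrading K L) : Prop :=
  LieSubalgebra.lieSpan K L ↑(Tsub fg) = ⊤ ∧
  ∀ z ∈ brkSpan K (Tsub fg) (Tsub fg), (∀ u : L, ⁅z, u⁆ = 0) → z = 0

/-- A 5-graded Lie algebra `(L, fg)` envelops a Kantor pair `KP`: there are identifications
of `P⁻` with `L_{-1}` and `P⁺` with `L_1` under which the products of `KP` are the products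
`⁅⁅x, y⁆, z⁆` of `L`. -/
structure Envelops {K : Type*} [CommRing K] {Pm Pp : Type*}
    [AddCommGroup Pm] [AddCommGroup Pp] [Module K Pm] [Module K Pp]
    (KP : KantorPair K Pm Pp)
    {L : Type*} [LieRing L] [LieAlgebra K L] (fg : FiveGrading K L) where
  em : Pm →ₗ[K] L
  ep : Pp →ₗ[K] L
  inj_m : Function.Injective em
  inj_p : Function.Injective ep
  range_m : LinearMap.range em = fg.g (-1)
  range_p : LinearMap.range ep = fg.g 1
  compat_m : ∀ (x z : Pm) (y : Pp), em (KP.tm x y z) = ⁅⁅em x, ep y⁆, em z⁆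
  compat_p : ∀ (x z : Pp) (y : Pm), ep (KP.tp x y z) = ⁅⁅ep x, em y⁆, ep z⁆

/-- A short Peirce grading (SP-grading) of a Kantor pair: a `ℤ`-grading with support
contained in `{0, 1}`. -/
structure SPGrading {K : Type*} [CommRing K] {Pm Pp : Type*}
    [AddCommGroup Pm] [AddCommGroup Pp] [Module K Pm] [Module K Pp]
    (KP : KantorPair K Pm Pp) where
  Qm : ℤ → Submodule K Pm
  Qp : ℤ → Submodule K Pp
  sup_m : Qm 0 ⊔ Qm 1 = ⊤
  disj_m : Disjoint (Qm 0) (Qm 1)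
  sup_p : Qp 0 ⊔ Qp 1 = ⊤
  disj_p : Disjoint (Qp 0) (Qp 1)
  vanish_m : ∀ i : ℤ, i ≠ 0 → i ≠ 1 → Qm i = ⊥
  vanish_p : ∀ i : ℤ, i ≠ 0 → i ≠ 1 → Qp i = ⊥
  grade_m : ∀ (i j k : ℤ) (x : Pm) (y : Pp) (z : Pm),
    x ∈ Qm i → y ∈ Qp j → z ∈ Qm k → KP.tm x y z ∈ Qm (i - j + k)
  grade_p : ∀ (i j k : ℤ) (x : Pp) (y : Pm) (z : Pp),
    x ∈ Qp i → y ∈ Qm j → z ∈ Qp k → KP.tp x y z ∈ Qp (i - j + k)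

/-- `KPc` is the reflection `P̌` of the SP-graded Kantor pair `(KP, SP)`:
`P̌^σ = P₀^{-σ} ⊕ P₁^σ`, with products given by the reflection formula. -/
def IsReflection {K : Type*} [CommRing K] {Pm Pp : Type*}
    [AddCommGroup Pm] [AddCommGroup Pp] [Module K Pm] [Module K Pp]
    (KP : KantorPair K Pm Pp) (SP : SPGrading KP)
    (KPc : KantorPair K ((SP.Qp 0) × (SP.Qm 1)) ((SP.Qm 0) × (SP.Qp 1))) : Prop :=
  (∀ (a c : (SP.Qm 0) × (SP.Qp 1)) (b : (SP.Qp 0) × (SP.Qm 1)),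
    ((KPc.tp a b c).1 : Pm)
      = KP.tm a.1 b.1 c.1 - KP.tm b.2 a.2 c.1 + (KP.tm a.1 c.2 b.2 - KP.tm b.2 c.2 a.1) ∧
    ((KPc.tp a b c).2 : Pp)
      = KP.tp a.2 b.2 c.2 - KP.tp b.1 a.1 c.2 + (KP.tp a.2 c.1 b.1 - KP.tp b.1 c.1 a.2)) ∧
  (∀ (a c : (SP.Qp 0) × (SP.Qm 1)) (b : (SP.Qm 0) × (SP.Qp 1)),
    ((KPc.tm a b c).1 : Pp)
      = KP.tp a.1 b.1 c.1 - KP.tp b.2 a.2 c.1 + (KP.tp a.1 c.2 b.2 - KP.tp b.2 c.2 a.1) ∧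
    ((KPc.tm a b c).2 : Pm)
      = KP.tm a.2 b.2 c.2 - KP.tm b.1 a.1 c.2 + (KP.tm a.2 c.1 b.1 - KP.tm b.1 c.1 a.2))

/-- The degree-`i` component of the SP-grading of the reflection, on the `-` side
(`P̌₀⁻ = P₀⁺`, `P̌₁⁻ = P₁⁻`). -/
def RefGradM {K : Type*} [CommRing K] {Pm Pp : Type*}
    [AddCommGroup Pm] [AddCommGroup Pp] [Module K Pm] [Module K Pp]
    {KP : KantorPair K Pm Pp} (SP : SPGrading KP) :
    ℤ → Submodule K ((SP.Qp 0) × (SP.Qm 1)) := fun i =>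
  if i = 0 then (⊤ : Submodule K (SP.Qp 0)).prod ⊥
  else if i = 1 then (⊥ : Submodule K (SP.Qp 0)).prod ⊤
  else ⊥

/-- The degree-`i` component of the SP-grading of the reflection, on the `+` side
(`P̌₀⁺ = P₀⁻`, `P̌₁⁺ = P₁⁺`). -/
def RefGradP {K : Type*} [CommRing K] {Pm Pp : Type*}
    [AddCommGroup Pm] [AddCommGroup Pp] [Module K Pm] [Module K Pp]
    {KP : KantorPair K Pm Pp} (SP : SPGrading KP) :
    ℤ → Submodule K ((SP.Qm 0) × (SP.Qp 1)) := fun i =>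
  if i = 0 then (⊤ : Submodule K (SP.Qm 0)).prod ⊥
  else if i = 1 then (⊥ : Submodule K (SP.Qm 0)).prod ⊤
  else ⊥


namespace KantorPair

variable {K : Type*} [CommRing K] {Pm Pp : Type*}
  [AddCommGroup Pm] [AddCommGroup Pp] [Module K Pm] [Module K Pp]

def flip (KP : KantorPair K Pm Pp) : KantorPair K Pp Pm where
  tm := KP.tp
  tp := KP.tm
  tm_add₁ := KP.tp_add₁
  tm_smul₁ := KP.tp_smul₁
  tm_add₂ := KP.tp_add₂
  tm_smul₂ := KP.tp_smul₂
  tm_add₃ := KP.tp_add₃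
  tm_smul₃ := KP.tp_smul₃
  tp_add₁ := KP.tm_add₁
  tp_smul₁ := KP.tm_smul₁
  tp_add₂ := KP.tm_add₂
  tp_smul₂ := KP.tm_smul₂
  tp_add₃ := KP.tm_add₃
  tp_smul₃ := KP.tm_smul₃
  k1m := KP.k1p
  k1p := KP.k1m
  k2m := KP.k2p
  k2p := KP.k2m

@[simp] lemma flip_tm (KP : KantorPair K Pm Pp) : (KP.flip).tm = KP.tp := rfl
@[simp] lemma flip_tp (KP : KantorPair K Pm Pp) : (KP.flip).tp = KP.tm := rfl

variable (KP : KantorPair K Pm Pp)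

lemma tm_sub₁ (x x' : Pm) (y : Pp) (z : Pm) :
    KP.tm (x - x') y z = KP.tm x y z - KP.tm x' y z := by
  rw [sub_eq_add_neg, KP.tm_add₁, ← neg_one_smul K x', KP.tm_smul₁, neg_one_smul,
    ← sub_eq_add_neg]

lemma tm_sub₂ (x : Pm) (y y' : Pp) (z : Pm) :
    KP.tm x (y - y') z = KP.tm x y z - KP.tm x y' z := by
  rw [sub_eq_add_neg, KP.tm_add₂, ← neg_one_smul K y', KP.tm_smul₂, neg_one_smul,
    ← sub_eq_add_neg]

lemma tm_sub₃ (x : Pm) (y : Pp) (z z' : Pm) :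
    KP.tm x y (z - z') = KP.tm x y z - KP.tm x y z' := by
  rw [sub_eq_add_neg, KP.tm_add₃, ← neg_one_smul K z', KP.tm_smul₃, neg_one_smul,
    ← sub_eq_add_neg]

lemma tp_sub₁ (x x' : Pp) (y : Pm) (z : Pp) :
    KP.tp (x - x') y z = KP.tp x y z - KP.tp x' y z := KP.flip.tm_sub₁ x x' y z

lemma tp_sub₂ (x : Pp) (y y' : Pm) (z : Pp) :
    KP.tp x (y - y') z = KP.tp x y z - KP.tp x y' z := KP.flip.tm_sub₂ x y y' z

lemma tp_sub₃ (x : Pp) (y : Pm) (z z' : Pp) :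
    KP.tp x y (z - z') = KP.tp x y z - KP.tp x y z' := KP.flip.tm_sub₃ x y z z'

lemma tm_zero₁ (y : Pp) (z : Pm) : KP.tm 0 y z = 0 := by
  have h := KP.tm_smul₁ (0 : K) 0 y z; simpa using h

lemma tm_zero₂ (x : Pm) (z : Pm) : KP.tm x 0 z = 0 := by
  have h := KP.tm_smul₂ (0 : K) x 0 z; simpa using h

lemma tm_zero₃ (x : Pm) (y : Pp) : KP.tm x y 0 = 0 := by
  have h := KP.tm_smul₃ (0 : K) x y 0; simpa using h

lemma tp_zero₁ (y : Pm) (z : Pp) : KP.tp 0 y z = 0 := KP.flip.tm_zero₁ y z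
lemma tp_zero₂ (x : Pp) (z : Pp) : KP.tp x 0 z = 0 := KP.flip.tm_zero₂ x z
lemma tp_zero₃ (x : Pp) (y : Pm) : KP.tp x y 0 = 0 := KP.flip.tm_zero₃ x y

end KantorPair

def SPGrading.flip {K : Type*} [CommRing K] {Pm Pp : Type*}
    [AddCommGroup Pm] [AddCommGroup Pp] [Module K Pm] [Module K Pp]
    {KP : KantorPair K Pm Pp} (SP : SPGrading KP) : SPGrading KP.flip where
  Qm := SP.Qp
  Qp := SP.Qm
  sup_m := SP.sup_p
  disj_m := SP.disj_p
  sup_p := SP.sup_m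
  disj_p := SP.disj_m
  vanish_m := SP.vanish_p
  vanish_p := SP.vanish_m
  grade_m := SP.grade_p
  grade_p := SP.grade_m

section Ref

variable {K : Type*} [CommRing K] {Pm Pp : Type*}
  [AddCommGroup Pm] [AddCommGroup Pp] [Module K Pm] [Module K Pp]
  (KP : KantorPair K Pm Pp)

lemma vanish_tm {SP : SPGrading KP} {i j k : ℤ} {x : Pm} {y : Pp} {z : Pm}
    (hx : x ∈ SP.Qm i) (hy : y ∈ SP.Qp j) (hz : z ∈ SP.Qm k)
    (h0 : i - j + k ≠ 0) (h1 : i - j + k ≠ 1) : KP.tm x y z = 0 := by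
  have h := SP.grade_m i j k x y z hx hy hz
  rw [SP.vanish_m _ h0 h1, Submodule.mem_bot] at h
  exact h

lemma vanish_tp {SP : SPGrading KP} {i j k : ℤ} {x : Pp} {y : Pm} {z : Pp}
    (hx : x ∈ SP.Qp i) (hy : y ∈ SP.Qm j) (hz : z ∈ SP.Qp k)
    (h0 : i - j + k ≠ 0) (h1 : i - j + k ≠ 1) : KP.tp x y z = 0 :=
  vanish_tm KP.flip (SP := SP.flip) hx hy hz h0 h1

/-- first component of the reflected product. -/
def rT1 (a0 : Pm) (a1 : Pp) (b0 : Pp) (b1 : Pm) (c0 : Pm) (c1 : Pp) : Pm :=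
  KP.tm a0 b0 c0 - KP.tm b1 a1 c0 + (KP.tm a0 c1 b1 - KP.tm b1 c1 a0)

/-- second component of the reflected product. -/
def rT2 (a0 : Pm) (a1 : Pp) (b0 : Pp) (b1 : Pm) (c0 : Pm) (c1 : Pp) : Pp :=
  KP.tp a1 b1 c1 - KP.tp b0 a0 c1 + (KP.tp a1 c0 b0 - KP.tp b0 c0 a1)

variable {KP}

lemma rT1_mem {SP : SPGrading KP} {a0 : Pm} {a1 : Pp} {b0 : Pp} {b1 : Pm} {c0 : Pm} {c1 : Pp}
    (ha0 : a0 ∈ SP.Qm 0) (ha1 : a1 ∈ SP.Qp 1) (hb0 : b0 ∈ SP.Qp 0) (hb1 : b1 ∈ SP.Qm 1)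
    (hc0 : c0 ∈ SP.Qm 0) (hc1 : c1 ∈ SP.Qp 1) : rT1 KP a0 a1 b0 b1 c0 c1 ∈ SP.Qm 0 := by
  have h1 := SP.grade_m 0 0 0 a0 b0 c0 ha0 hb0 hc0
  have h2 := SP.grade_m 1 1 0 b1 a1 c0 hb1 ha1 hc0
  have h3 := SP.grade_m 0 1 1 a0 c1 b1 ha0 hc1 hb1
  have h4 := SP.grade_m 1 1 0 b1 c1 a0 hb1 hc1 ha0
  norm_num at h1 h2 h3 h4
  exact add_mem (sub_mem h1 h2) (sub_mem h3 h4)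

lemma rT2_mem {SP : SPGrading KP} {a0 : Pm} {a1 : Pp} {b0 : Pp} {b1 : Pm} {c0 : Pm} {c1 : Pp}
    (ha0 : a0 ∈ SP.Qm 0) (ha1 : a1 ∈ SP.Qp 1) (hb0 : b0 ∈ SP.Qp 0) (hb1 : b1 ∈ SP.Qm 1)
    (hc0 : c0 ∈ SP.Qm 0) (hc1 : c1 ∈ SP.Qp 1) : rT2 KP a0 a1 b0 b1 c0 c1 ∈ SP.Qp 1 := by
  have h1 := SP.grade_p 1 1 1 a1 b1 c1 ha1 hb1 hc1
  have h2 := SP.grade_p 0 0 1 b0 a0 c1 hb0 ha0 hc1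
  have h3 := SP.grade_p 1 0 0 a1 c0 b0 ha1 hc0 hb0
  have h4 := SP.grade_p 0 0 1 b0 c0 a1 hb0 hc0 ha1
  norm_num at h1 h2 h3 h4
  exact add_mem (sub_mem h1 h2) (sub_mem h3 h4)

variable (KP)

/-- the reflected product on subtypes. -/
def refT (SP : SPGrading KP) (a : (SP.Qm 0) × (SP.Qp 1)) (b : (SP.Qp 0) × (SP.Qm 1))
    (c : (SP.Qm 0) × (SP.Qp 1)) : (SP.Qm 0) × (SP.Qp 1) :=
  (⟨rT1 KP a.1 a.2 b.1 b.2 c.1 c.2,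
      rT1_mem a.1.2 a.2.2 b.1.2 b.2.2 c.1.2 c.2.2⟩,
   ⟨rT2 KP a.1 a.2 b.1 b.2 c.1 c.2,
      rT2_mem a.1.2 a.2.2 b.1.2 b.2.2 c.1.2 c.2.2⟩)

variable (SP : SPGrading KP)

lemma refT_add₁ (a a' : (SP.Qm 0) × (SP.Qp 1)) (b : (SP.Qp 0) × (SP.Qm 1))
    (c : (SP.Qm 0) × (SP.Qp 1)) :
    refT KP SP (a + a') b c = refT KP SP a b c + refT KP SP a' b c := by
  refine Prod.ext (Subtype.ext ?_) (Subtype.ext ?_) <;>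
    simp only [refT, Prod.fst_add, Prod.snd_add, Submodule.coe_add, rT1, rT2,
      KP.tm_add₁, KP.tm_add₂, KP.tm_add₃, KP.tp_add₁, KP.tp_add₂, KP.tp_add₃] <;>
    abel

lemma refT_add₂ (a : (SP.Qm 0) × (SP.Qp 1)) (b b' : (SP.Qp 0) × (SP.Qm 1))
    (c : (SP.Qm 0) × (SP.Qp 1)) :
    refT KP SP a (b + b') c = refT KP SP a b c + refT KP SP a b' c := by
  refine Prod.ext (Subtype.ext ?_) (Subtype.ext ?_) <;>
    simp only [refT, Prod.fst_add, Prod.snd_add, Submodule.coe_add, rT1, rT2,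
      KP.tm_add₁, KP.tm_add₂, KP.tm_add₃, KP.tp_add₁, KP.tp_add₂, KP.tp_add₃] <;>
    abel

lemma refT_add₃ (a : (SP.Qm 0) × (SP.Qp 1)) (b : (SP.Qp 0) × (SP.Qm 1))
    (c c' : (SP.Qm 0) × (SP.Qp 1)) :
    refT KP SP a b (c + c') = refT KP SP a b c + refT KP SP a b c' := by
  refine Prod.ext (Subtype.ext ?_) (Subtype.ext ?_) <;>
    simp only [refT, Prod.fst_add, Prod.snd_add, Submodule.coe_add, rT1, rT2,
      KP.tm_add₁, KP.tm_add₂, KP.tm_add₃, KP.tp_add₁, KP.tp_add₂, KP.tp_add₃] <;>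
    abel

lemma refT_smul₁ (t : K) (a : (SP.Qm 0) × (SP.Qp 1)) (b : (SP.Qp 0) × (SP.Qm 1))
    (c : (SP.Qm 0) × (SP.Qp 1)) :
    refT KP SP (t • a) b c = t • refT KP SP a b c := by
  refine Prod.ext (Subtype.ext ?_) (Subtype.ext ?_) <;>
    simp only [refT, Prod.smul_fst, Prod.smul_snd, SetLike.val_smul, rT1, rT2,
      KP.tm_smul₁, KP.tm_smul₂, KP.tm_smul₃, KP.tp_smul₁, KP.tp_smul₂, KP.tp_smul₃,
      smul_add, smul_sub] <;>
    abel

lemma refT_smul₂ (t : K) (a : (SP.Qm 0) × (SP.Qp 1)) (b : (SP.Qp 0) × (SP.Qm 1))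
    (c : (SP.Qm 0) × (SP.Qp 1)) :
    refT KP SP a (t • b) c = t • refT KP SP a b c := by
  refine Prod.ext (Subtype.ext ?_) (Subtype.ext ?_) <;>
    simp only [refT, Prod.smul_fst, Prod.smul_snd, SetLike.val_smul, rT1, rT2,
      KP.tm_smul₁, KP.tm_smul₂, KP.tm_smul₃, KP.tp_smul₁, KP.tp_smul₂, KP.tp_smul₃,
      smul_add, smul_sub] <;>
    abel

lemma refT_smul₃ (t : K) (a : (SP.Qm 0) × (SP.Qp 1)) (b : (SP.Qp 0) × (SP.Qm 1))
    (c : (SP.Qm 0) × (SP.Qp 1)) :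
    refT KP SP a b (t • c) = t • refT KP SP a b c := by
  refine Prod.ext (Subtype.ext ?_) (Subtype.ext ?_) <;>
    simp only [refT, Prod.smul_fst, Prod.smul_snd, SetLike.val_smul, rT1, rT2,
      KP.tm_smul₁, KP.tm_smul₂, KP.tm_smul₃, KP.tp_smul₁, KP.tp_smul₂, KP.tp_smul₃,
      smul_add, smul_sub] <;>
    abel



set_option maxHeartbeats 2000000 in
lemma core_k1_1 (x0 z0 u0 : Pm) (x1 z1 u1 : Pp) (y0 w0 : Pp) (y1 w1 : Pm)
    (hx0 : x0 ∈ SP.Qm 0) (hz0 : z0 ∈ SP.Qm 0) (hu0 : u0 ∈ SP.Qm 0)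
    (hx1 : x1 ∈ SP.Qp 1) (hz1 : z1 ∈ SP.Qp 1) (hu1 : u1 ∈ SP.Qp 1)
    (hy0 : y0 ∈ SP.Qp 0) (hw0 : w0 ∈ SP.Qp 0) (hy1 : y1 ∈ SP.Qm 1) (hw1 : w1 ∈ SP.Qm 1) :
    rT1 KP x0 x1 y0 y1 (rT1 KP z0 z1 w0 w1 u0 u1) (rT2 KP z0 z1 w0 w1 u0 u1) - (rT1 KP z0 z1 w0 w1 (rT1 KP x0 x1 y0 y1 u0 u1) (rT2 KP x0 x1 y0 y1 u0 u1))
      = rT1 KP (rT1 KP x0 x1 y0 y1 z0 z1) (rT2 KP x0 x1 y0 y1 z0 z1) w0 w1 u0 u1 - (rT1 KP z0 z1 (rT1 KP.flip y0 y1 x0 x1 w0 w1) (rT2 KP.flip y0 y1 x0 x1 w0 w1) u0 u1) := by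
  have vv0 : (KP.tm u0 x1 z0) = 0 := vanish_tm KP hu0 hx1 hz0 (by decide) (by decide)
  have vv1 : (KP.tm u0 z1 x0) = 0 := vanish_tm KP hu0 hz1 hx0 (by decide) (by decide)
  have vv2 : (KP.tm x0 z1 u0) = 0 := vanish_tm KP hx0 hz1 hu0 (by decide) (by decide)
  have vv3 : (KP.tm z0 x1 u0) = 0 := vanish_tm KP hz0 hx1 hu0 (by decide) (by decide)
  have vv4 : (KP.tp x1 u0 z1) = 0 := vanish_tp KP hx1 hu0 hz1 (by decide) (by decide)
  linear_combination (norm := (simp only [rT1, rT2, KantorPair.flip_tm, KantorPair.flip_tp, vv0, vv1, vv2, vv3, vv4, KP.tm_add₁, KP.tm_add₂, KP.tm_add₃, KP.tp_add₁, KP.tp_add₂, KP.tp_add₃, KP.tm_sub₁, KP.tm_sub₂, KP.tm_sub₃, KP.tp_sub₁, KP.tp_sub₂, KP.tp_sub₃, KP.tm_zero₁, KP.tm_zero₂, KP.tm_zero₃, KP.tp_zero₁, KP.tp_zero₂, KP.tp_zero₃]; abel)) (KP.k1m x0 z0 u0 y0 w0) - (KP.k2m x0 y1 u0 w0 z1)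 + (KP.k2m x0 y1 u0 z1 w0) - (KP.k1m y1 z0 u0 x1 w0) - (KP.k1m u0 w1 x0 y0 z1) + (KP.k2m u0 w1 x0 y0 z1) + (KP.k1m u0 x0 w1 y0 z1) - (KP.k2m u0 x0 w1 y0 z1) + (KP.k1m w1 u0 x0 y0 z1) - (KP.k1m w1 x0 u0 y0 z1) + (KP.k2m w1 x0 u0 y0 z1) - (KP.k1m x0 u0 w1 y0 z1) + (KP.k1m u0 w1 z0 x1 y0) - (KP.k2m u0 w1 z0 x1 y0) - (KP.k1m u0 w1 z0 y0 x1) + (KP.k2m u0 w1 z0 y0 x1) - (KP.k1m u0 z0 w1 x1 y0) + (KP.k2m u0 z0 w1 x1 y0) + (KP.k1m u0 z0 w1 y0 x1) - (KP.k2m u0 z0 w1 y0 x1) - (KP.k1m w1 u0 z0 x1 y0) + (KP.k1m w1 u0 z0 y0 x1) + (KP.k1m z0 u0 w1 x1 y0) - (KP.k1m z0 u0 w1 y0 x1) + (KP.k1m u0 w1 y1 x1 z1) - (KP.k2m u0 w1 y1 x1 z1) - (KP.k1m u0 y1 w1 x1 z1) + (KP.k2m u0 y1 w1 x1 z1) -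 (KP.k1m w1 u0 y1 x1 z1) + (KP.k1m w1 y1 u0 x1 z1) - (KP.k2m w1 y1 u0 x1 z1) + (KP.k1m y1 u0 w1 x1 z1) - (KP.k2m x0 y1 z0 w0 u1) - (KP.k1m x0 w1 z0 y0 u1) + (KP.k1m x0 z0 w1 y0 u1) + (KP.k2m x0 y1 w1 z1 u1) + (KP.k1m y1 w1 z0 x1 u1) - (KP.k1m y1 z0 w1 x1 u1)

set_option maxHeartbeats 2000000 in
lemma core_k1_2 (x0 z0 u0 : Pm) (x1 z1 u1 : Pp) (y0 w0 : Pp) (y1 w1 : Pm)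
    (hx0 : x0 ∈ SP.Qm 0) (hz0 : z0 ∈ SP.Qm 0) (hu0 : u0 ∈ SP.Qm 0)
    (hx1 : x1 ∈ SP.Qp 1) (hz1 : z1 ∈ SP.Qp 1) (hu1 : u1 ∈ SP.Qp 1)
    (hy0 : y0 ∈ SP.Qp 0) (hw0 : w0 ∈ SP.Qp 0) (hy1 : y1 ∈ SP.Qm 1) (hw1 : w1 ∈ SP.Qm 1) :
    rT2 KP x0 x1 y0 y1 (rT1 KP z0 z1 w0 w1 u0 u1) (rT2 KP z0 z1 w0 w1 u0 u1) - (rT2 KP z0 z1 w0 w1 (rT1 KP x0 x1 y0 y1 u0 u1) (rT2 KP x0 x1 y0 y1 u0 u1))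
      = rT2 KP (rT1 KP x0 x1 y0 y1 z0 z1) (rT2 KP x0 x1 y0 y1 z0 z1) w0 w1 u0 u1 - (rT2 KP z0 z1 (rT1 KP.flip y0 y1 x0 x1 w0 w1) (rT2 KP.flip y0 y1 x0 x1 w0 w1) u0 u1) := by
  have vv0 : (KP.tm x0 u1 z0) = 0 := vanish_tm KP hx0 hu1 hz0 (by decide) (by decide)
  have vv1 : (KP.tp u1 x0 z1) = 0 := vanish_tp KP hu1 hx0 hz1 (by decide) (by decide)
  have vv2 : (KP.tp u1 z0 x1) = 0 := vanish_tp KP hu1 hz0 hx1 (by decide) (by decide)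
  have vv3 : (KP.tp x1 z0 u1) = 0 := vanish_tp KP hx1 hz0 hu1 (by decide) (by decide)
  have vv4 : (KP.tp z1 x0 u1) = 0 := vanish_tp KP hz1 hx0 hu1 (by decide) (by decide)
  linear_combination (norm := (simp only [rT1, rT2, KantorPair.flip_tm, KantorPair.flip_tp, vv0, vv1, vv2, vv3, vv4, KP.tm_add₁, KP.tm_add₂, KP.tm_add₃, KP.tp_add₁, KP.tp_add₂, KP.tp_add₃, KP.tm_sub₁, KP.tm_sub₂, KP.tm_sub₃, KP.tp_sub₁, KP.tp_sub₂, KP.tp_sub₃, KP.tm_zero₁, KP.tm_zero₂, KP.tm_zero₃, KP.tp_zero₁, KP.tp_zero₂, KP.tp_zero₃]; abel)) (KP.k1p y0 w0 z1 x0 u0) - (KP.k1p y0 z1 w0 x0 u0) + (KP.k2p x1 y0 w0 z0 u0) - (KP.k1p x1 w0 z1 y1 u0) + (KP.k1p x1 z1 w0 y1 u0) - (KP.k2p x1 y0 z1 w1 u0) + (KP.k1p u1 w0 y0 x0 z0) - (KP.k2p u1 w0 y0 x0 z0) - (KP.k1p u1 y0 w0 x0 z0) + (KP.k2p u1 y0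 w0 x0 z0) - (KP.k1p w0 u1 y0 x0 z0) + (KP.k1p w0 y0 u1 x0 z0) - (KP.k2p w0 y0 u1 x0 z0) + (KP.k1p y0 u1 w0 x0 z0) + (KP.k1p u1 w0 z1 x0 y1) - (KP.k2p u1 w0 z1 x0 y1) - (KP.k1p u1 w0 z1 y1 x0) + (KP.k2p u1 w0 z1 y1 x0) - (KP.k1p u1 z1 w0 x0 y1) + (KP.k2p u1 z1 w0 x0 y1) + (KP.k1p u1 z1 w0 y1 x0) - (KP.k2p u1 z1 w0 y1 x0) - (KP.k1p w0 u1 z1 x0 y1) + (KP.k1p w0 u1 z1 y1 x0) + (KP.k1p z1 u1 w0 x0 y1) - (KP.k1p z1 u1 w0 y1 x0) - (KP.k1p u1 w0 x1 y1 z0) + (KP.k2p u1 w0 x1 y1 z0) + (KP.k1p u1 x1 w0 y1 z0) - (KP.k2p u1 x1 w0 y1 z0) + (KP.k1p w0 u1 x1 y1 z0) - (KP.k1p w0 x1 u1 y1 z0) + (KP.k2p w0 x1 u1 y1 z0) - (KP.k1p x1 u1 w0 y1 z0) - (KP.k1p y0 z1 u1 x0 w1) - (KP.k2p x1 y0 u1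 w1 z0) + (KP.k2p x1 y0 u1 z0 w1) + (KP.k1p x1 z1 u1 y1 w1)

set_option maxHeartbeats 2000000 in
lemma core_k2_1 (x0 z0 u0 : Pm) (x1 z1 u1 : Pp) (w0 v0 : Pp) (w1 v1 : Pm)
    (hx0 : x0 ∈ SP.Qm 0) (hz0 : z0 ∈ SP.Qm 0) (hu0 : u0 ∈ SP.Qm 0)
    (hx1 : x1 ∈ SP.Qp 1) (hz1 : z1 ∈ SP.Qp 1) (hu1 : u1 ∈ SP.Qp 1)
    (hw0 : w0 ∈ SP.Qp 0) (hv0 : v0 ∈ SP.Qp 0) (hw1 : w1 ∈ SP.Qm 1) (hv1 : v1 ∈ SP.Qm 1) :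
    (rT1 KP x0 x1 (rT1 KP.flip w0 w1 u0 u1 v0 v1) (rT2 KP.flip w0 w1 u0 u1 v0 v1) z0 z1 - (rT1 KP z0 z1 (rT1 KP.flip w0 w1 u0 u1 v0 v1) (rT2 KP.flip w0 w1 u0 u1 v0 v1) x0 x1)) + (rT1 KP u0 u1 w0 w1 ((rT1 KP x0 x1 v0 v1 z0 z1) - (rT1 KP z0 z1 v0 v1 x0 x1)) ((rT2 KP x0 x1 v0 v1 z0 z1) - (rT2 KP z0 z1 v0 v1 x0 x1)))
      = rT1 KP ((rT1 KP x0 x1 w0 w1 z0 z1) - (rT1 KP z0 z1 w0 w1 x0 x1)) ((rT2 KP x0 x1 w0 w1 z0 z1) - (rT2 KP z0 z1 w0 w1 x0 x1)) v0 v1 u0 u1 - (rT1 KP u0 u1 v0 v1 ((rT1 KP x0 x1 w0 w1 z0 z1) - (rT1 KP z0 z1 w0 w1 x0 x1)) ((rT2 KP x0 x1 w0 w1 z0 z1) - (rT2 KP z0 z1 w0 w1 x0 x1))) := by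
  have vv0 : (KP.tm u0 x1 z0) = 0 := vanish_tm KP hu0 hx1 hz0 (by decide) (by decide)
  have vv1 : (KP.tm u0 z1 x0) = 0 := vanish_tm KP hu0 hz1 hx0 (by decide) (by decide)
  have vv2 : (KP.tm x0 u1 z0) = 0 := vanish_tm KP hx0 hu1 hz0 (by decide) (by decide)
  have vv3 : (KP.tm x0 z1 u0) = 0 := vanish_tm KP hx0 hz1 hu0 (by decide) (by decide)
  have vv4 : (KP.tm z0 u1 x0) = 0 := vanish_tm KP hz0 hu1 hx0 (by decide) (by decide)
  have vv5 : (KP.tm z0 x1 u0) = 0 := vanish_tm KP hz0 hx1 hu0 (by decide) (by decide)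
  have vv6 : (KP.tp x1 u0 z1) = 0 := vanish_tp KP hx1 hu0 hz1 (by decide) (by decide)
  have vv7 : (KP.tp x1 z0 u1) = 0 := vanish_tp KP hx1 hz0 hu1 (by decide) (by decide)
  have vv8 : (KP.tp z1 u0 x1) = 0 := vanish_tp KP hz1 hu0 hx1 (by decide) (by decide)
  have vv9 : (KP.tp z1 x0 u1) = 0 := vanish_tp KP hz1 hx0 hu1 (by decide) (by decide)
  linear_combination (norm := (simp only [rT1, rT2, KantorPair.flip_tm, KantorPair.flip_tp, vv0, vv1, vv2, vv3, vv4, vv5, vv6, vv7, vv8, vv9, KP.tm_add₁, KP.tm_add₂, KP.tm_add₃, KP.tp_add₁, KP.tp_add₂, KP.tp_add₃, KP.tm_sub₁, KP.tm_sub₂, KP.tm_sub₃, KP.tp_sub₁, KP.tp_sub₂, KP.tp_sub₃, KP.tm_zero₁, KP.tm_zero₂, KP.tm_zero₃, KP.tp_zero₁, KP.tp_zero₂, KP.tp_zero₃]; abel)) (KP.k2m x0 z0 u0 w0 v0) + (KP.k1m u0 w1 x0 z1 v0) - (KP.k2m u0 w1 x0 z1 v0) - (KP.k1m u0 x0 w1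 z1 v0) + (KP.k2m u0 x0 w1 z1 v0) - (KP.k1m w1 u0 x0 z1 v0) + (KP.k1m w1 x0 u0 z1 v0) - (KP.k2m w1 x0 u0 z1 v0) - (KP.k1m u0 w1 z0 x1 v0) + (KP.k2m u0 w1 z0 x1 v0) + (KP.k1m u0 z0 w1 x1 v0) - (KP.k2m u0 z0 w1 x1 v0) + (KP.k1m w1 u0 z0 x1 v0) - (KP.k1m w1 z0 u0 x1 v0) + (KP.k2m w1 z0 u0 x1 v0) - (KP.k1m x0 u0 v1 z1 w0) + (KP.k1m z0 u0 v1 x1 w0) - (KP.k1m u0 w1 v1 x1 z1) + (KP.k2m u0 w1 v1 x1 z1) + (KP.k1m u0 w1 v1 z1 x1) - (KP.k2m u0 w1 v1 z1 x1) + (KP.k1m w1 u0 v1 x1 z1) - (KP.k1m w1 u0 v1 z1 x1) - (KP.k2m x0 z0 w1 u1 v0) - (KP.k2m x0 z0 v1 u1 w0) + (KP.k2m x0 z0 v1 w0 u1) + (KP.k1m v1 w1 x0 z1 u1) - (KP.k2m v1 w1 x0 z1 u1) - (KP.k1m v1 x0 w1 z1 u1) + (KP.k2m v1 x0 w1 z1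 u1) - (KP.k1m w1 v1 x0 z1 u1) + (KP.k1m w1 x0 v1 z1 u1) - (KP.k2m w1 x0 v1 z1 u1) + (KP.k1m x0 v1 w1 z1 u1) - (KP.k1m v1 w1 z0 x1 u1) + (KP.k2m v1 w1 z0 x1 u1) + (KP.k1m v1 z0 w1 x1 u1) - (KP.k2m v1 z0 w1 x1 u1) + (KP.k1m w1 v1 z0 x1 u1) - (KP.k1m w1 z0 v1 x1 u1) + (KP.k2m w1 z0 v1 x1 u1) - (KP.k1m z0 v1 w1 x1 u1)

set_option maxHeartbeats 2000000 in
lemma core_k2_2 (x0 z0 u0 : Pm) (x1 z1 u1 : Pp) (w0 v0 : Pp) (w1 v1 : Pm)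
    (hx0 : x0 ∈ SP.Qm 0) (hz0 : z0 ∈ SP.Qm 0) (hu0 : u0 ∈ SP.Qm 0)
    (hx1 : x1 ∈ SP.Qp 1) (hz1 : z1 ∈ SP.Qp 1) (hu1 : u1 ∈ SP.Qp 1)
    (hw0 : w0 ∈ SP.Qp 0) (hv0 : v0 ∈ SP.Qp 0) (hw1 : w1 ∈ SP.Qm 1) (hv1 : v1 ∈ SP.Qm 1) :
    (rT2 KP x0 x1 (rT1 KP.flip w0 w1 u0 u1 v0 v1) (rT2 KP.flip w0 w1 u0 u1 v0 v1) z0 z1 - (rT2 KP z0 z1 (rT1 KP.flip w0 w1 u0 u1 v0 v1) (rT2 KP.flip w0 w1 u0 u1 v0 v1) x0 x1)) + (rT2 KP u0 u1 w0 w1 ((rT1 KP x0 x1 v0 v1 z0 z1) - (rT1 KP z0 z1 v0 v1 x0 x1)) ((rT2 KP x0 x1 v0 v1 z0 z1) - (rT2 KP z0 z1 v0 v1 x0 x1)))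
      = rT2 KP ((rT1 KP x0 x1 w0 w1 z0 z1) - (rT1 KP z0 z1 w0 w1 x0 x1)) ((rT2 KP x0 x1 w0 w1 z0 z1) - (rT2 KP z0 z1 w0 w1 x0 x1)) v0 v1 u0 u1 - (rT2 KP u0 u1 v0 v1 ((rT1 KP x0 x1 w0 w1 z0 z1) - (rT1 KP z0 z1 w0 w1 x0 x1)) ((rT2 KP x0 x1 w0 w1 z0 z1) - (rT2 KP z0 z1 w0 w1 x0 x1))) := by
  have vv0 : (KP.tm x0 u1 z0) = 0 := vanish_tm KP hx0 hu1 hz0 (by decide) (by decide)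
  have vv1 : (KP.tm x0 z1 u0) = 0 := vanish_tm KP hx0 hz1 hu0 (by decide) (by decide)
  have vv2 : (KP.tm z0 u1 x0) = 0 := vanish_tm KP hz0 hu1 hx0 (by decide) (by decide)
  have vv3 : (KP.tm z0 x1 u0) = 0 := vanish_tm KP hz0 hx1 hu0 (by decide) (by decide)
  have vv4 : (KP.tp u1 x0 z1) = 0 := vanish_tp KP hu1 hx0 hz1 (by decide) (by decide)
  have vv5 : (KP.tp u1 z0 x1) = 0 := vanish_tp KP hu1 hz0 hx1 (by decide) (by decide)
  have vv6 : (KP.tp x1 u0 z1) = 0 := vanish_tp KP hx1 hu0 hz1 (by decide) (by decide)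
  have vv7 : (KP.tp x1 z0 u1) = 0 := vanish_tp KP hx1 hz0 hu1 (by decide) (by decide)
  have vv8 : (KP.tp z1 u0 x1) = 0 := vanish_tp KP hz1 hu0 hx1 (by decide) (by decide)
  have vv9 : (KP.tp z1 x0 u1) = 0 := vanish_tp KP hz1 hx0 hu1 (by decide) (by decide)
  linear_combination (norm := (simp only [rT1, rT2, KantorPair.flip_tm, KantorPair.flip_tp, vv0, vv1, vv2, vv3, vv4, vv5, vv6, vv7, vv8, vv9, KP.tm_add₁, KP.tm_add₂, KP.tm_add₃, KP.tp_add₁, KP.tp_add₂, KP.tp_add₃, KP.tm_sub₁, KP.tm_sub₂, KP.tm_sub₃, KP.tp_sub₁, KP.tp_sub₂, KP.tp_sub₃, KP.tm_zero₁, KP.tm_zero₂, KP.tm_zero₃, KP.tp_zero₁, KP.tp_zero₂, KP.tp_zero₃]; abel)) -(KP.k1p v0 w0 z1 x0 u0) + (KP.k2p v0 w0 z1 x0 u0) + (KP.k1p v0 z1 w0 x0 u0) - (KP.k2p v0 z1 w0 x0 u0) + (KP.k1p w0 v0 z1 x0 u0) - (KP.k1p w0 z1 v0 x0 u0) + (KP.k2p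 w0 z1 v0 x0 u0) - (KP.k1p z1 v0 w0 x0 u0) + (KP.k1p v0 w0 x1 z0 u0) - (KP.k2p v0 w0 x1 z0 u0) - (KP.k1p v0 x1 w0 z0 u0) + (KP.k2p v0 x1 w0 z0 u0) - (KP.k1p w0 v0 x1 z0 u0) + (KP.k1p w0 x1 v0 z0 u0) - (KP.k2p w0 x1 v0 z0 u0) + (KP.k1p x1 v0 w0 z0 u0) - (KP.k2p x1 z1 v0 u0 w1) + (KP.k2p x1 z1 v0 w1 u0) - (KP.k2p x1 z1 w0 u0 v1) - (KP.k1p u1 w0 v0 x0 z0) + (KP.k2p u1 w0 v0 x0 z0) + (KP.k1p u1 w0 v0 z0 x0) - (KP.k2p u1 w0 v0 z0 x0) + (KP.k1p w0 u1 v0 x0 z0) - (KP.k1p w0 u1 v0 z0 x0) + (KP.k1p z1 u1 v0 x0 w1) - (KP.k1p x1 u1 v0 z0 w1) - (KP.k1p u1 w0 z1 x0 v1) + (KP.k2p u1 w0 z1 x0 v1) + (KP.k1p u1 z1 w0 x0 v1) - (KP.k2p u1 z1 w0 x0 v1) + (KP.k1p w0 u1 z1 x0 v1) - (KP.k1p w0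 z1 u1 x0 v1) + (KP.k2p w0 z1 u1 x0 v1) + (KP.k1p u1 w0 x1 z0 v1) - (KP.k2p u1 w0 x1 z0 v1) - (KP.k1p u1 x1 w0 z0 v1) + (KP.k2p u1 x1 w0 z0 v1) - (KP.k1p w0 u1 x1 z0 v1) + (KP.k1p w0 x1 u1 z0 v1) - (KP.k2p w0 x1 u1 z0 v1) + (KP.k2p x1 z1 u1 w1 v1)

end Ref

section Lift

variable {K : Type*} [CommRing K] {Pm Pp : Type*}
  [AddCommGroup Pm] [AddCommGroup Pp] [Module K Pm] [Module K Pp]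
  (KP : KantorPair K Pm Pp) (SP : SPGrading KP)

set_option maxHeartbeats 1000000 in
lemma refT_k1 (x z u : (SP.Qm 0) × (SP.Qp 1)) (y w : (SP.Qp 0) × (SP.Qm 1)) :
    refT KP SP x y (refT KP SP z w u) - refT KP SP z w (refT KP SP x y u)
      = refT KP SP (refT KP SP x y z) w u
        - refT KP SP z (refT KP.flip SP.flip y x w) u := by
  refine Prod.ext (Subtype.ext ?_) (Subtype.ext ?_)
  · exact core_k1_1 KP SP x.1 z.1 u.1 x.2 z.2 u.2 y.1 w.1 y.2 w.2
      x.1.2 z.1.2 u.1.2 x.2.2 z.2.2 u.2.2 y.1.2 w.1.2 y.2.2 w.2.2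
  · exact core_k1_2 KP SP x.1 z.1 u.1 x.2 z.2 u.2 y.1 w.1 y.2 w.2
      x.1.2 z.1.2 u.1.2 x.2.2 z.2.2 u.2.2 y.1.2 w.1.2 y.2.2 w.2.2

set_option maxHeartbeats 1000000 in
lemma refT_k2 (x z u : (SP.Qm 0) × (SP.Qp 1)) (w v : (SP.Qp 0) × (SP.Qm 1)) :
    (refT KP SP x (refT KP.flip SP.flip w u v) z - refT KP SP z (refT KP.flip SP.flip w u v) x)
        + refT KP SP u w (refT KP SP x v z - refT KP SP z v x)
      = refT KP SP (refT KP SP x w z - refT KP SP z w x) v u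
        - refT KP SP u v (refT KP SP x w z - refT KP SP z w x) := by
  refine Prod.ext (Subtype.ext ?_) (Subtype.ext ?_)
  · exact core_k2_1 KP SP x.1 z.1 u.1 x.2 z.2 u.2 w.1 v.1 w.2 v.2
      x.1.2 z.1.2 u.1.2 x.2.2 z.2.2 u.2.2 w.1.2 v.1.2 w.2.2 v.2.2
  · exact core_k2_2 KP SP x.1 z.1 u.1 x.2 z.2 u.2 w.1 v.1 w.2 v.2
      x.1.2 z.1.2 u.1.2 x.2.2 z.2.2 u.2.2 w.1.2 v.1.2 w.2.2 v.2.2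

end Lift

section Grad

variable {K : Type*} [CommRing K] {Pm Pp : Type*}
  [AddCommGroup Pm] [AddCommGroup Pp] [Module K Pm] [Module K Pp]
  (KP : KantorPair K Pm Pp) (SP : SPGrading KP)

lemma refT_zero₁ (b : (SP.Qp 0) × (SP.Qm 1)) (c : (SP.Qm 0) × (SP.Qp 1)) :
    refT KP SP 0 b c = 0 := by
  have h := refT_add₁ KP SP 0 0 b c
  rw [add_zero] at h
  exact left_eq_add.mp h

lemma refT_zero₂ (a : (SP.Qm 0) × (SP.Qp 1)) (c : (SP.Qm 0) × (SP.Qp 1)) :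
    refT KP SP a 0 c = 0 := by
  have h := refT_add₂ KP SP a 0 0 c
  rw [add_zero] at h
  exact left_eq_add.mp h

lemma refT_zero₃ (a : (SP.Qm 0) × (SP.Qp 1)) (b : (SP.Qp 0) × (SP.Qm 1)) :
    refT KP SP a b 0 = 0 := by
  have h := refT_add₃ KP SP a b 0 0
  rw [add_zero] at h
  exact left_eq_add.mp h

variable {KP}


lemma RefGradP_eq_zero : RefGradP SP 0 = (⊤ : Submodule K (SP.Qm 0)).prod (⊥ : Submodule K (SP.Qp 1)) := if_pos rfl

lemma RefGradP_eq_one : RefGradP SP 1 = (⊥ : Submodule K (SP.Qm 0)).prod (⊤ : Submodule K (SP.Qp 1)) := by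
  unfold RefGradP; rw [if_neg (by decide), if_pos rfl]

lemma RefGradP_eq_other {i : ℤ} (hi0 : i ≠ 0) (hi1 : i ≠ 1) : RefGradP SP i = ⊥ := by
  unfold RefGradP; rw [if_neg hi0, if_neg hi1]

lemma RefGradM_eq_zero : RefGradM SP 0 = (⊤ : Submodule K (SP.Qp 0)).prod (⊥ : Submodule K (SP.Qm 1)) := if_pos rfl

lemma RefGradM_eq_one : RefGradM SP 1 = (⊥ : Submodule K (SP.Qp 0)).prod (⊤ : Submodule K (SP.Qm 1)) := by
  unfold RefGradM; rw [if_neg (by decide), if_pos rfl]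

lemma RefGradM_eq_other {i : ℤ} (hi0 : i ≠ 0) (hi1 : i ≠ 1) : RefGradM SP i = ⊥ := by
  unfold RefGradM; rw [if_neg hi0, if_neg hi1]

lemma RefGradP_cases {i : ℤ} {x : (SP.Qm 0) × (SP.Qp 1)} (hx : x ∈ RefGradP SP i) :
    (i = 0 ∧ ((x.2 : Pp) = 0)) ∨ (i = 1 ∧ ((x.1 : Pm) = 0)) ∨ x = 0 := by
  by_cases hi0 : i = 0
  · subst hi0
    rw [RefGradP_eq_zero] at hx
    rw [Submodule.mem_prod] at hx
    obtain ⟨-, hx⟩ := hx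
    rw [Submodule.mem_bot] at hx
    exact Or.inl ⟨rfl, by simp [hx]⟩
  · by_cases hi1 : i = 1
    · subst hi1
      rw [RefGradP_eq_one] at hx
      rw [Submodule.mem_prod] at hx
      obtain ⟨hx, -⟩ := hx
      rw [Submodule.mem_bot] at hx
      exact Or.inr (Or.inl ⟨rfl, by simp [hx]⟩)
    · rw [RefGradP_eq_other SP hi0 hi1, Submodule.mem_bot] at hx
      exact Or.inr (Or.inr hx)

lemma RefGradM_cases {i : ℤ} {x : (SP.Qp 0) × (SP.Qm 1)} (hx : x ∈ RefGradM SP i) :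
    (i = 0 ∧ ((x.2 : Pm) = 0)) ∨ (i = 1 ∧ ((x.1 : Pp) = 0)) ∨ x = 0 := by
  by_cases hi0 : i = 0
  · subst hi0
    rw [RefGradM_eq_zero] at hx
    rw [Submodule.mem_prod] at hx
    obtain ⟨-, hx⟩ := hx
    rw [Submodule.mem_bot] at hx
    exact Or.inl ⟨rfl, by simp [hx]⟩
  · by_cases hi1 : i = 1
    · subst hi1
      rw [RefGradM_eq_one] at hx
      rw [Submodule.mem_prod] at hx
      obtain ⟨hx, -⟩ := hx
      rw [Submodule.mem_bot] at hx
      exact Or.inr (Or.inl ⟨rfl, by simp [hx]⟩)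
    · rw [RefGradM_eq_other SP hi0 hi1, Submodule.mem_bot] at hx
      exact Or.inr (Or.inr hx)

lemma mem_RefGradP_0 {x : (SP.Qm 0) × (SP.Qp 1)} (h : (x.2 : Pp) = 0) :
    x ∈ RefGradP SP 0 := by
  rw [RefGradP_eq_zero]
  exact Submodule.mem_prod.mpr ⟨trivial, (Submodule.mem_bot K).mpr (Subtype.ext (by simp [h]))⟩

lemma mem_RefGradP_1 {x : (SP.Qm 0) × (SP.Qp 1)} (h : (x.1 : Pm) = 0) :
    x ∈ RefGradP SP 1 := by
  rw [RefGradP_eq_one]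
  exact Submodule.mem_prod.mpr ⟨(Submodule.mem_bot K).mpr (Subtype.ext (by simp [h])), trivial⟩

variable (KP)

lemma refT_grad (i j k : ℤ) (x : (SP.Qm 0) × (SP.Qp 1)) (y : (SP.Qp 0) × (SP.Qm 1))
    (z : (SP.Qm 0) × (SP.Qp 1)) (hx : x ∈ RefGradP SP i) (hy : y ∈ RefGradM SP j)
    (hz : z ∈ RefGradP SP k) : refT KP SP x y z ∈ RefGradP SP (i - j + k) := by
  rcases RefGradP_cases SP hx with ⟨hi, ex⟩ | ⟨hi, ex⟩ | hx0
  · rcases RefGradM_cases SP hy with ⟨hj, ey⟩ | ⟨hj, ey⟩ | hy0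
    · rcases RefGradP_cases SP hz with ⟨hk, ez⟩ | ⟨hk, ez⟩ | hz0
      · subst hi; subst hj; subst hk
        rw [show ((0:ℤ) - 0 + 0) = 0 by decide]
        exact mem_RefGradP_0 SP
          (by simp [refT, rT2, ex, ey, ez, KP.tp_zero₁, KP.tp_zero₂, KP.tp_zero₃])
      · subst hi; subst hj; subst hk
        rw [show ((0:ℤ) - 0 + 1) = 1 by decide]
        exact mem_RefGradP_1 SP
          (by simp [refT, rT1, ex, ey, ez, KP.tm_zero₁, KP.tm_zero₂, KP.tm_zero₃])
      · rw [hz0, refT_zero₃]; exact zero_mem _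
    · rcases RefGradP_cases SP hz with ⟨hk, ez⟩ | ⟨hk, ez⟩ | hz0
      · subst hi; subst hj; subst hk
        have hb : RefGradP SP ((0:ℤ) - 1 + 0) = ⊥ := by
          rw [show ((0:ℤ) - 1 + 0) = -1 by decide]
          exact RefGradP_eq_other SP (by decide) (by decide)
        rw [hb, Submodule.mem_bot]
        refine Prod.ext (Subtype.ext ?_) (Subtype.ext ?_)
        · simp [refT, rT1, ex, ey, ez, KP.tm_zero₁, KP.tm_zero₂, KP.tm_zero₃]
        · simp [refT, rT2, ex, ey, ez, KP.tp_zero₁, KP.tp_zero₂, KP.tp_zero₃]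
      · subst hi; subst hj; subst hk
        rw [show ((0:ℤ) - 1 + 1) = 0 by decide]
        exact mem_RefGradP_0 SP
          (by simp [refT, rT2, ex, ey, ez, KP.tp_zero₁, KP.tp_zero₂, KP.tp_zero₃])
      · rw [hz0, refT_zero₃]; exact zero_mem _
    · rw [hy0, refT_zero₂]; exact zero_mem _
  · rcases RefGradM_cases SP hy with ⟨hj, ey⟩ | ⟨hj, ey⟩ | hy0
    · rcases RefGradP_cases SP hz with ⟨hk, ez⟩ | ⟨hk, ez⟩ | hz0
      · subst hi; subst hj; subst hk
        rw [show ((1:ℤ) - 0 + 0) = 1 by decide]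
        exact mem_RefGradP_1 SP
          (by simp [refT, rT1, ex, ey, ez, KP.tm_zero₁, KP.tm_zero₂, KP.tm_zero₃])
      · subst hi; subst hj; subst hk
        have hb : RefGradP SP ((1:ℤ) - 0 + 1) = ⊥ := by
          rw [show ((1:ℤ) - 0 + 1) = 2 by decide]
          exact RefGradP_eq_other SP (by decide) (by decide)
        rw [hb, Submodule.mem_bot]
        refine Prod.ext (Subtype.ext ?_) (Subtype.ext ?_)
        · simp [refT, rT1, ex, ey, ez, KP.tm_zero₁, KP.tm_zero₂, KP.tm_zero₃]
        · simp [refT, rT2, ex, ey, ez, KP.tp_zero₁, KP.tp_zero₂, KP.tp_zero₃]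
      · rw [hz0, refT_zero₃]; exact zero_mem _
    · rcases RefGradP_cases SP hz with ⟨hk, ez⟩ | ⟨hk, ez⟩ | hz0
      · subst hi; subst hj; subst hk
        rw [show ((1:ℤ) - 1 + 0) = 0 by decide]
        exact mem_RefGradP_0 SP
          (by simp [refT, rT2, ex, ey, ez, KP.tp_zero₁, KP.tp_zero₂, KP.tp_zero₃])
      · subst hi; subst hj; subst hk
        rw [show ((1:ℤ) - 1 + 1) = 1 by decide]
        exact mem_RefGradP_1 SP
          (by simp [refT, rT1, ex, ey, ez, KP.tm_zero₁, KP.tm_zero₂, KP.tm_zero₃])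
      · rw [hz0, refT_zero₃]; exact zero_mem _
    · rw [hy0, refT_zero₂]; exact zero_mem _
  · rw [hx0, refT_zero₁]; exact zero_mem _

lemma RefGrad_sup {M N : Type*} [AddCommGroup M] [AddCommGroup N] [Module K M] [Module K N] :
    ((⊤ : Submodule K M).prod (⊥ : Submodule K N)) ⊔ ((⊥ : Submodule K M).prod ⊤) = ⊤ := by
  rw [Submodule.prod_sup_prod]
  simp

lemma RefGrad_disj {M N : Type*} [AddCommGroup M] [AddCommGroup N] [Module K M] [Module K N] :
    Disjoint ((⊤ : Submodule K M).prod (⊥ : Submodule K N)) ((⊥ : Submodule K M).prod ⊤) := by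
  rw [disjoint_iff, Submodule.prod_inf_prod]
  simp [Submodule.prod_bot]

end Grad

/-- Let `P` be an SP-graded Kantor pair.  Then the reflection `P̌`,
with `P̌^σ = P₀^{-σ} ⊕ P₁^σ` and products given by the reflection formula, is a Kantor
pair, and `P̌₀^σ = P₀^{-σ}`, `P̌₁^σ = P₁^σ` defines an SP-grading of `P̌`. -/
theorem statement11 {K : Type*} [CommRing K] (h6 : IsUnit (6 : K))
    {Pm Pp : Type*} [AddCommGroup Pm] [AddCommGroup Pp] [Module K Pm] [Module K Pp]
    (KP : KantorPair K Pm Pp) (SP : SPGrading KP) :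
    ∃ KPc : KantorPair K ((SP.Qp 0) × (SP.Qm 1)) ((SP.Qm 0) × (SP.Qp 1)),
      IsReflection KP SP KPc ∧
      -- the decomposition P̌ = P̌₀ ⊕ P̌₁ ...
      (RefGradM SP 0 ⊔ RefGradM SP 1 = ⊤) ∧ Disjoint (RefGradM SP 0) (RefGradM SP 1) ∧
      (RefGradP SP 0 ⊔ RefGradP SP 1 = ⊤) ∧ Disjoint (RefGradP SP 0) (RefGradP SP 1) ∧
      -- ... is an SP-grading of P̌
      (∀ (i j k : ℤ) (x : (SP.Qm 0) × (SP.Qp 1)) (y : (SP.Qp 0) × (SP.Qm 1))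
          (z : (SP.Qm 0) × (SP.Qp 1)),
        x ∈ RefGradP SP i → y ∈ RefGradM SP j → z ∈ RefGradP SP k →
          KPc.tp x y z ∈ RefGradP SP (i - j + k)) ∧
      (∀ (i j k : ℤ) (x : (SP.Qp 0) × (SP.Qm 1)) (y : (SP.Qm 0) × (SP.Qp 1))
          (z : (SP.Qp 0) × (SP.Qm 1)),
        x ∈ RefGradM SP i → y ∈ RefGradP SP j → z ∈ RefGradM SP k →
          KPc.tm x y z ∈ RefGradM SP (i - j + k)) := by
  refine ⟨{ tm := refT KP.flip SP.flip
            tp := refT KP SP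
            tm_add₁ := refT_add₁ KP.flip SP.flip
            tm_smul₁ := refT_smul₁ KP.flip SP.flip
            tm_add₂ := refT_add₂ KP.flip SP.flip
            tm_smul₂ := refT_smul₂ KP.flip SP.flip
            tm_add₃ := refT_add₃ KP.flip SP.flip
            tm_smul₃ := refT_smul₃ KP.flip SP.flip
            tp_add₁ := refT_add₁ KP SP
            tp_smul₁ := refT_smul₁ KP SP
            tp_add₂ := refT_add₂ KP SP
            tp_smul₂ := refT_smul₂ KP SP
            tp_add₃ := refT_add₃ KP SP
            tp_smul₃ := refT_smul₃ KP SP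
            k1m := refT_k1 KP.flip SP.flip
            k1p := refT_k1 KP SP
            k2m := refT_k2 KP.flip SP.flip
            k2p := refT_k2 KP SP },
    ⟨fun a c b => ⟨rfl, rfl⟩, fun a c b => ⟨rfl, rfl⟩⟩,
    RefGrad_sup, RefGrad_disj, RefGrad_sup, RefGrad_disj,
    fun i j k x y z hx hy hz => refT_grad KP SP i j k x y z hx hy hz,
    fun i j k x y z hx hy hz => refT_grad KP.flip SP.flip i j k x y z hx hy hz⟩
end

section
/- Let P be an SP-graded Kantor pair over 𝕂 and P̌ its reflection. Then P̌ is a Jordan pair if and only if P₀ and P₁ are left ideals of P and both P₀ and P₁ are Jordan pairs (under the restricted products). If moreover P itself is a Jordan pair, then P̌ is a Jordan pair if and only if P₀ and P₁ are ideals of P, in which case P = P₀ ⊕ P₁ is a direct sum of ideals and P̌ = (P₀)^op ⊕ P₁ is a direct sum of ideals. -/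
/-- `Q` is a left ideal of the Kantor pair: `{P, P, Q} ⊆ Q` on both sides. -/
def IsLeftIdealPair {K : Type*} [CommRing K] {Pm Pp : Type*}
    [AddCommGroup Pm] [AddCommGroup Pp] [Module K Pm] [Module K Pp]
    (KP : KantorPair K Pm Pp) (Qm : Submodule K Pm) (Qp : Submodule K Pp) : Prop :=
  (∀ (x : Pm) (y : Pp) (q : Pm), q ∈ Qm → KP.tm x y q ∈ Qm) ∧
  (∀ (x : Pp) (y : Pm) (q : Pp), q ∈ Qp → KP.tp x y q ∈ Qp)

/-- The subpair `(Qm, Qp)` is a Jordan pair under the restricted products. -/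
def IsJordanSubpair {K : Type*} [CommRing K] {Pm Pp : Type*}
    [AddCommGroup Pm] [AddCommGroup Pp] [Module K Pm] [Module K Pp]
    (KP : KantorPair K Pm Pp) (Qm : Submodule K Pm) (Qp : Submodule K Pp) : Prop :=
  (∀ (x z : Pm) (y : Pp), x ∈ Qm → z ∈ Qm → y ∈ Qp → KP.tm x y z = KP.tm z y x) ∧
  (∀ (x z : Pp) (y : Pm), x ∈ Qp → z ∈ Qp → y ∈ Qm → KP.tp x y z = KP.tp z y x)

namespace S13aux

lemma cancel_aux {M : Type*} [AddCommGroup M] {A B : M} (h : A - B = -B) : A = 0 := by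
  rwa [sub_eq_iff_eq_add, neg_add_cancel] at h

variable {K : Type*} [CommRing K] {Pm Pp : Type*}
  [AddCommGroup Pm] [AddCommGroup Pp] [Module K Pm] [Module K Pp]

section Zero
variable (KP : KantorPair K Pm Pp)

lemma tmz₁ (y : Pp) (z : Pm) : KP.tm 0 y z = 0 := by
  have h := KP.tm_smul₁ (0 : K) 0 y z; simpa using h

lemma tmz₂ (x z : Pm) : KP.tm x 0 z = 0 := by
  have h := KP.tm_smul₂ (0 : K) x 0 z; simpa using h

lemma tmz₃ (x : Pm) (y : Pp) : KP.tm x y 0 = 0 := by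
  have h := KP.tm_smul₃ (0 : K) x y 0; simpa using h

lemma tpz₁ (y : Pm) (z : Pp) : KP.tp 0 y z = 0 := by
  have h := KP.tp_smul₁ (0 : K) 0 y z; simpa using h

lemma tpz₂ (x z : Pp) : KP.tp x 0 z = 0 := by
  have h := KP.tp_smul₂ (0 : K) x 0 z; simpa using h

lemma tpz₃ (x : Pp) (y : Pm) : KP.tp x y 0 = 0 := by
  have h := KP.tp_smul₃ (0 : K) x y 0; simpa using h

end Zero

variable {KP : KantorPair K Pm Pp} (SP : SPGrading KP)

/-- `{P₁⁻, P₀⁺, P₀⁻} = 0`. -/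
def Vm100 : Prop :=
  ∀ x, x ∈ SP.Qm 1 → ∀ y, y ∈ SP.Qp 0 → ∀ z, z ∈ SP.Qm 0 → KP.tm x y z = 0

/-- `{P₁⁺, P₀⁻, P₀⁺} = 0`. -/
def Vp100 : Prop :=
  ∀ x, x ∈ SP.Qp 1 → ∀ y, y ∈ SP.Qm 0 → ∀ z, z ∈ SP.Qp 0 → KP.tp x y z = 0

/-- `{P₀⁻, P₁⁺, P₁⁻} = 0`. -/
def Vm011 : Prop :=
  ∀ x, x ∈ SP.Qm 0 → ∀ y, y ∈ SP.Qp 1 → ∀ z, z ∈ SP.Qm 1 → KP.tm x y z = 0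

/-- `{P₀⁺, P₁⁻, P₁⁺} = 0`. -/
def Vp011 : Prop :=
  ∀ x, x ∈ SP.Qp 0 → ∀ y, y ∈ SP.Qm 1 → ∀ z, z ∈ SP.Qp 1 → KP.tp x y z = 0

lemma gm {i j k : ℤ} {x : Pm} {y : Pp} {z : Pm}
    (hx : x ∈ SP.Qm i) (hy : y ∈ SP.Qp j) (hz : z ∈ SP.Qm k)
    {t : ℤ} (ht : i - j + k = t) : KP.tm x y z ∈ SP.Qm t := by
  rw [← ht]; exact SP.grade_m i j k x y z hx hy hz

lemma gp {i j k : ℤ} {x : Pp} {y : Pm} {z : Pp}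
    (hx : x ∈ SP.Qp i) (hy : y ∈ SP.Qm j) (hz : z ∈ SP.Qp k)
    {t : ℤ} (ht : i - j + k = t) : KP.tp x y z ∈ SP.Qp t := by
  rw [← ht]; exact SP.grade_p i j k x y z hx hy hz

lemma gmz {i j k : ℤ} {x : Pm} {y : Pp} {z : Pm}
    (hx : x ∈ SP.Qm i) (hy : y ∈ SP.Qp j) (hz : z ∈ SP.Qm k)
    (h0 : i - j + k ≠ 0) (h1 : i - j + k ≠ 1) : KP.tm x y z = 0 := by
  have h := SP.grade_m i j k x y z hx hy hz
  rw [SP.vanish_m _ h0 h1] at h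
  simpa using h

lemma gpz {i j k : ℤ} {x : Pp} {y : Pm} {z : Pp}
    (hx : x ∈ SP.Qp i) (hy : y ∈ SP.Qm j) (hz : z ∈ SP.Qp k)
    (h0 : i - j + k ≠ 0) (h1 : i - j + k ≠ 1) : KP.tp x y z = 0 := by
  have h := SP.grade_p i j k x y z hx hy hz
  rw [SP.vanish_p _ h0 h1] at h
  simpa using h

lemma djm {w : Pm} (h0 : w ∈ SP.Qm 0) (h1 : w ∈ SP.Qm 1) : w = 0 :=
  Submodule.disjoint_def.mp SP.disj_m w h0 h1

lemma djp {w : Pp} (h0 : w ∈ SP.Qp 0) (h1 : w ∈ SP.Qp 1) : w = 0 :=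
  Submodule.disjoint_def.mp SP.disj_p w h0 h1

lemma decm (x : Pm) : ∃ x0 ∈ SP.Qm 0, ∃ x1 ∈ SP.Qm 1, x = x0 + x1 := by
  have hx : x ∈ SP.Qm 0 ⊔ SP.Qm 1 := by rw [SP.sup_m]; exact Submodule.mem_top
  obtain ⟨a, ha, b, hb, h⟩ := Submodule.mem_sup.1 hx
  exact ⟨a, ha, b, hb, h.symm⟩

lemma decp (y : Pp) : ∃ y0 ∈ SP.Qp 0, ∃ y1 ∈ SP.Qp 1, y = y0 + y1 := by
  have hy : y ∈ SP.Qp 0 ⊔ SP.Qp 1 := by rw [SP.sup_p]; exact Submodule.mem_top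
  obtain ⟨a, ha, b, hb, h⟩ := Submodule.mem_sup.1 hy
  exact ⟨a, ha, b, hb, h.symm⟩

lemma li0_iff :
    IsLeftIdealPair KP (SP.Qm 0) (SP.Qp 0) ↔ (Vm100 SP ∧ Vp100 SP) := by
  constructor
  · intro hLI
    constructor
    · intro x hx y hy z hz
      exact djm SP (hLI.1 x y z hz) (gm SP hx hy hz (t := 1) (ht := by norm_num))
    · intro x hx y hy z hz
      exact djp SP (hLI.2 x y z hz) (gp SP hx hy hz (t := 1) (ht := by norm_num))
  · rintro ⟨hVm, hVp⟩
    constructor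
    · intro x y q hq
      obtain ⟨x0, hx0, x1, hx1, rfl⟩ := decm SP x
      obtain ⟨y0, hy0, y1, hy1, rfl⟩ := decp SP y
      rw [KP.tm_add₁, KP.tm_add₂, KP.tm_add₂]
      rw [gmz SP hx0 hy1 hq (by norm_num) (by norm_num), hVm x1 hx1 y0 hy0 q hq]
      exact Submodule.add_mem _
        (Submodule.add_mem _ (gm SP hx0 hy0 hq (by norm_num)) (Submodule.zero_mem _))
        (Submodule.add_mem _ (Submodule.zero_mem _) (gm SP hx1 hy1 hq (by norm_num)))
    · intro x y q hq
      obtain ⟨x0, hx0, x1, hx1, rfl⟩ := decp SP x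
      obtain ⟨y0, hy0, y1, hy1, rfl⟩ := decm SP y
      rw [KP.tp_add₁, KP.tp_add₂, KP.tp_add₂]
      rw [gpz SP hx0 hy1 hq (by norm_num) (by norm_num), hVp x1 hx1 y0 hy0 q hq]
      exact Submodule.add_mem _
        (Submodule.add_mem _ (gp SP hx0 hy0 hq (by norm_num)) (Submodule.zero_mem _))
        (Submodule.add_mem _ (Submodule.zero_mem _) (gp SP hx1 hy1 hq (by norm_num)))

lemma li1_iff :
    IsLeftIdealPair KP (SP.Qm 1) (SP.Qp 1) ↔ (Vm011 SP ∧ Vp011 SP) := by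
  constructor
  · intro hLI
    constructor
    · intro x hx y hy z hz
      exact djm SP (gm SP hx hy hz (t := 0) (ht := by norm_num)) (hLI.1 x y z hz)
    · intro x hx y hy z hz
      exact djp SP (gp SP hx hy hz (t := 0) (ht := by norm_num)) (hLI.2 x y z hz)
  · rintro ⟨hVm, hVp⟩
    constructor
    · intro x y q hq
      obtain ⟨x0, hx0, x1, hx1, rfl⟩ := decm SP x
      obtain ⟨y0, hy0, y1, hy1, rfl⟩ := decp SP y
      rw [KP.tm_add₁, KP.tm_add₂, KP.tm_add₂]
      rw [gmz SP hx1 hy0 hq (by norm_num) (by norm_num), hVm x0 hx0 y1 hy1 q hq]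
      exact Submodule.add_mem _
        (Submodule.add_mem _ (gm SP hx0 hy0 hq (by norm_num)) (Submodule.zero_mem _))
        (Submodule.add_mem _ (Submodule.zero_mem _) (gm SP hx1 hy1 hq (by norm_num)))
    · intro x y q hq
      obtain ⟨x0, hx0, x1, hx1, rfl⟩ := decp SP x
      obtain ⟨y0, hy0, y1, hy1, rfl⟩ := decm SP y
      rw [KP.tp_add₁, KP.tp_add₂, KP.tp_add₂]
      rw [gpz SP hx1 hy0 hq (by norm_num) (by norm_num), hVp x0 hx0 y1 hy1 q hq]
      exact Submodule.add_mem _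
        (Submodule.add_mem _ (gp SP hx0 hy0 hq (by norm_num)) (Submodule.zero_mem _))
        (Submodule.add_mem _ (Submodule.zero_mem _) (gp SP hx1 hy1 hq (by norm_num)))

variable (KPc : KantorPair K ((SP.Qp 0) × (SP.Qm 1)) ((SP.Qm 0) × (SP.Qp 1)))

lemma jordan_iff (hrefl : IsReflection KP SP KPc) :
    KPc.IsJordanPair ↔
      (Vm100 SP ∧ Vp100 SP ∧ Vm011 SP ∧ Vp011 SP ∧
       IsJordanSubpair KP (SP.Qm 0) (SP.Qp 0) ∧ IsJordanSubpair KP (SP.Qm 1) (SP.Qp 1)) := by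
  constructor
  · intro hJ
    have hVm100 : Vm100 SP := by
      intro x hx y hy z hz
      have base := hJ.1 (0, ⟨x, hx⟩) (⟨y, hy⟩, 0) (⟨z, hz⟩, 0)
      have h : ((KPc.tm (0, ⟨x, hx⟩) (⟨z, hz⟩, 0) (⟨y, hy⟩, 0)).2 : Pm)
          = ((KPc.tm (⟨y, hy⟩, 0) (⟨z, hz⟩, 0) (0, ⟨x, hx⟩)).2 : Pm) := by rw [base]
      rw [(hrefl.2 (0, ⟨x, hx⟩) (⟨y, hy⟩, 0) (⟨z, hz⟩, 0)).2,
          (hrefl.2 (⟨y, hy⟩, 0) (0, ⟨x, hx⟩) (⟨z, hz⟩, 0)).2] at h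
      simp only [ZeroMemClass.coe_zero, tmz₁, tmz₂, tmz₃, sub_zero, zero_sub, sub_self,
        zero_add, add_zero, neg_zero] at h
      exact cancel_aux h
    have hVm011 : Vm011 SP := by
      intro x hx y hy z hz
      have base := hJ.2 (⟨x, hx⟩, 0) (0, ⟨y, hy⟩) (0, ⟨z, hz⟩)
      have h : ((KPc.tp (⟨x, hx⟩, 0) (0, ⟨z, hz⟩) (0, ⟨y, hy⟩)).1 : Pm)
          = ((KPc.tp (0, ⟨y, hy⟩) (0, ⟨z, hz⟩) (⟨x, hx⟩, 0)).1 : Pm) := by rw [base]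
      rw [(hrefl.1 (⟨x, hx⟩, 0) (0, ⟨y, hy⟩) (0, ⟨z, hz⟩)).1,
          (hrefl.1 (0, ⟨y, hy⟩) (⟨x, hx⟩, 0) (0, ⟨z, hz⟩)).1] at h
      simp only [ZeroMemClass.coe_zero, tmz₁, tmz₂, tmz₃, sub_zero, zero_sub, sub_self,
        zero_add, add_zero, neg_zero] at h
      exact cancel_aux h
    have hVp100 : Vp100 SP := by
      intro x hx y hy z hz
      have base := hJ.2 (0, ⟨x, hx⟩) (⟨y, hy⟩, 0) (⟨z, hz⟩, 0)
      have h : ((KPc.tp (0, ⟨x, hx⟩) (⟨z, hz⟩, 0) (⟨y, hy⟩, 0)).2 : Pp)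
          = ((KPc.tp (⟨y, hy⟩, 0) (⟨z, hz⟩, 0) (0, ⟨x, hx⟩)).2 : Pp) := by rw [base]
      rw [(hrefl.1 (0, ⟨x, hx⟩) (⟨y, hy⟩, 0) (⟨z, hz⟩, 0)).2,
          (hrefl.1 (⟨y, hy⟩, 0) (0, ⟨x, hx⟩) (⟨z, hz⟩, 0)).2] at h
      simp only [ZeroMemClass.coe_zero, tpz₁, tpz₂, tpz₃, sub_zero, zero_sub, sub_self,
        zero_add, add_zero, neg_zero] at h
      exact cancel_aux h
    have hVp011 : Vp011 SP := by
      intro x hx y hy z hz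
      have base := hJ.1 (⟨x, hx⟩, 0) (0, ⟨y, hy⟩) (0, ⟨z, hz⟩)
      have h : ((KPc.tm (⟨x, hx⟩, 0) (0, ⟨z, hz⟩) (0, ⟨y, hy⟩)).1 : Pp)
          = ((KPc.tm (0, ⟨y, hy⟩) (0, ⟨z, hz⟩) (⟨x, hx⟩, 0)).1 : Pp) := by rw [base]
      rw [(hrefl.2 (⟨x, hx⟩, 0) (0, ⟨y, hy⟩) (0, ⟨z, hz⟩)).1,
          (hrefl.2 (0, ⟨y, hy⟩) (⟨x, hx⟩, 0) (0, ⟨z, hz⟩)).1] at h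
      simp only [ZeroMemClass.coe_zero, tpz₁, tpz₂, tpz₃, sub_zero, zero_sub, sub_self,
        zero_add, add_zero, neg_zero] at h
      exact cancel_aux h
    have hJ0m : ∀ (x z : Pm) (y : Pp), x ∈ SP.Qm 0 → z ∈ SP.Qm 0 → y ∈ SP.Qp 0 →
        KP.tm x y z = KP.tm z y x := by
      intro x z y hx hz hy
      have base := hJ.2 (⟨x, hx⟩, 0) (⟨z, hz⟩, 0) (⟨y, hy⟩, 0)
      have h : ((KPc.tp (⟨x, hx⟩, 0) (⟨y, hy⟩, 0) (⟨z, hz⟩, 0)).1 : Pm)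
          = ((KPc.tp (⟨z, hz⟩, 0) (⟨y, hy⟩, 0) (⟨x, hx⟩, 0)).1 : Pm) := by rw [base]
      rw [(hrefl.1 (⟨x, hx⟩, 0) (⟨z, hz⟩, 0) (⟨y, hy⟩, 0)).1,
          (hrefl.1 (⟨z, hz⟩, 0) (⟨x, hx⟩, 0) (⟨y, hy⟩, 0)).1] at h
      simpa only [ZeroMemClass.coe_zero, tmz₁, tmz₂, tmz₃, sub_zero, zero_sub, sub_self,
        zero_add, add_zero, neg_zero] using h
    have hJ0p : ∀ (x z : Pp) (y : Pm), x ∈ SP.Qp 0 → z ∈ SP.Qp 0 → y ∈ SP.Qm 0 →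
        KP.tp x y z = KP.tp z y x := by
      intro x z y hx hz hy
      have base := hJ.1 (⟨x, hx⟩, 0) (⟨z, hz⟩, 0) (⟨y, hy⟩, 0)
      have h : ((KPc.tm (⟨x, hx⟩, 0) (⟨y, hy⟩, 0) (⟨z, hz⟩, 0)).1 : Pp)
          = ((KPc.tm (⟨z, hz⟩, 0) (⟨y, hy⟩, 0) (⟨x, hx⟩, 0)).1 : Pp) := by rw [base]
      rw [(hrefl.2 (⟨x, hx⟩, 0) (⟨z, hz⟩, 0) (⟨y, hy⟩, 0)).1,
          (hrefl.2 (⟨z, hz⟩, 0) (⟨x, hx⟩, 0) (⟨y, hy⟩, 0)).1] at h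
      simpa only [ZeroMemClass.coe_zero, tpz₁, tpz₂, tpz₃, sub_zero, zero_sub, sub_self,
        zero_add, add_zero, neg_zero] using h
    have hJ1m : ∀ (x z : Pm) (y : Pp), x ∈ SP.Qm 1 → z ∈ SP.Qm 1 → y ∈ SP.Qp 1 →
        KP.tm x y z = KP.tm z y x := by
      intro x z y hx hz hy
      have base := hJ.1 (0, ⟨x, hx⟩) (0, ⟨z, hz⟩) (0, ⟨y, hy⟩)
      have h : ((KPc.tm (0, ⟨x, hx⟩) (0, ⟨y, hy⟩) (0, ⟨z, hz⟩)).2 : Pm)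
          = ((KPc.tm (0, ⟨z, hz⟩) (0, ⟨y, hy⟩) (0, ⟨x, hx⟩)).2 : Pm) := by rw [base]
      rw [(hrefl.2 (0, ⟨x, hx⟩) (0, ⟨z, hz⟩) (0, ⟨y, hy⟩)).2,
          (hrefl.2 (0, ⟨z, hz⟩) (0, ⟨x, hx⟩) (0, ⟨y, hy⟩)).2] at h
      simpa only [ZeroMemClass.coe_zero, tmz₁, tmz₂, tmz₃, sub_zero, zero_sub, sub_self,
        zero_add, add_zero, neg_zero] using h
    have hJ1p : ∀ (x z : Pp) (y : Pm), x ∈ SP.Qp 1 → z ∈ SP.Qp 1 → y ∈ SP.Qm 1 →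
        KP.tp x y z = KP.tp z y x := by
      intro x z y hx hz hy
      have base := hJ.2 (0, ⟨x, hx⟩) (0, ⟨z, hz⟩) (0, ⟨y, hy⟩)
      have h : ((KPc.tp (0, ⟨x, hx⟩) (0, ⟨y, hy⟩) (0, ⟨z, hz⟩)).2 : Pp)
          = ((KPc.tp (0, ⟨z, hz⟩) (0, ⟨y, hy⟩) (0, ⟨x, hx⟩)).2 : Pp) := by rw [base]
      rw [(hrefl.1 (0, ⟨x, hx⟩) (0, ⟨z, hz⟩) (0, ⟨y, hy⟩)).2,
          (hrefl.1 (0, ⟨z, hz⟩) (0, ⟨x, hx⟩) (0, ⟨y, hy⟩)).2] at h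
      simpa only [ZeroMemClass.coe_zero, tpz₁, tpz₂, tpz₃, sub_zero, zero_sub, sub_self,
        zero_add, add_zero, neg_zero] using h
    exact ⟨hVm100, hVp100, hVm011, hVp011, ⟨hJ0m, hJ0p⟩, ⟨hJ1m, hJ1p⟩⟩
  · rintro ⟨hVm100, hVp100, hVm011, hVp011, hJS0, hJS1⟩
    constructor
    · intro a c b
      refine Prod.ext (Subtype.ext ?_) (Subtype.ext ?_)
      · rw [(hrefl.2 a c b).1, (hrefl.2 c a b).1]
        rw [hJS0.2 (↑a.1) (↑c.1) (↑b.1) a.1.2 c.1.2 b.1.2,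
            hVp011 (↑a.1) a.1.2 (↑c.2) c.2.2 (↑b.2) b.2.2,
            hVp011 (↑c.1) c.1.2 (↑a.2) a.2.2 (↑b.2) b.2.2]
        abel
      · rw [(hrefl.2 a c b).2, (hrefl.2 c a b).2]
        rw [hJS1.1 (↑a.2) (↑c.2) (↑b.2) a.2.2 c.2.2 b.2.2,
            hVm100 (↑a.2) a.2.2 (↑c.1) c.1.2 (↑b.1) b.1.2,
            hVm100 (↑c.2) c.2.2 (↑a.1) a.1.2 (↑b.1) b.1.2]
        abel
    · intro a c b
      refine Prod.ext (Subtype.ext ?_) (Subtype.ext ?_)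
      · rw [(hrefl.1 a c b).1, (hrefl.1 c a b).1]
        rw [hJS0.1 (↑a.1) (↑c.1) (↑b.1) a.1.2 c.1.2 b.1.2,
            hVm011 (↑a.1) a.1.2 (↑c.2) c.2.2 (↑b.2) b.2.2,
            hVm011 (↑c.1) c.1.2 (↑a.2) a.2.2 (↑b.2) b.2.2]
        abel
      · rw [(hrefl.1 a c b).2, (hrefl.1 c a b).2]
        rw [hJS1.2 (↑a.2) (↑c.2) (↑b.2) a.2.2 c.2.2 b.2.2,
            hVp100 (↑a.2) a.2.2 (↑c.1) c.1.2 (↑b.1) b.1.2,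
            hVp100 (↑c.2) c.2.2 (↑a.1) a.1.2 (↑b.1) b.1.2]
        abel

lemma ideal0_of (hKPJ : KP.IsJordanPair) (hVm : Vm100 SP) (hVp : Vp100 SP) :
    KP.IsIdealPair (SP.Qm 0) (SP.Qp 0) := by
  obtain ⟨hLm, hLp⟩ := (li0_iff SP).2 ⟨hVm, hVp⟩
  refine ⟨fun x z y q hq => ⟨hLm x y q hq, ?_⟩, ?_, fun x z y q hq => ⟨hLp x y q hq, ?_⟩, ?_⟩
  · rw [hKPJ.1 q z y]; exact hLm z y q hq
  · intro x z r hr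
    obtain ⟨x0, hx0, x1, hx1, rfl⟩ := decm SP x
    obtain ⟨z0, hz0, z1, hz1, rfl⟩ := decm SP z
    rw [KP.tm_add₁, KP.tm_add₃, KP.tm_add₃]
    have h01 : KP.tm x0 r z1 = 0 := by
      rw [hKPJ.1 x0 z1 r]; exact hVm z1 hz1 r hr x0 hx0
    have h10 : KP.tm x1 r z0 = 0 := hVm x1 hx1 r hr z0 hz0
    have h11 : KP.tm x1 r z1 = 0 := gmz SP hx1 hr hz1 (by norm_num) (by norm_num)
    rw [h01, h10, h11]
    exact Submodule.add_mem _
      (Submodule.add_mem _ (gm SP hx0 hr hz0 (by norm_num)) (Submodule.zero_mem _))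
      (Submodule.add_mem _ (Submodule.zero_mem _) (Submodule.zero_mem _))
  · rw [hKPJ.2 q z y]; exact hLp z y q hq
  · intro x z r hr
    obtain ⟨x0, hx0, x1, hx1, rfl⟩ := decp SP x
    obtain ⟨z0, hz0, z1, hz1, rfl⟩ := decp SP z
    rw [KP.tp_add₁, KP.tp_add₃, KP.tp_add₃]
    have h01 : KP.tp x0 r z1 = 0 := by
      rw [hKPJ.2 x0 z1 r]; exact hVp z1 hz1 r hr x0 hx0
    have h10 : KP.tp x1 r z0 = 0 := hVp x1 hx1 r hr z0 hz0
    have h11 : KP.tp x1 r z1 = 0 := gpz SP hx1 hr hz1 (by norm_num) (by norm_num)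
    rw [h01, h10, h11]
    exact Submodule.add_mem _
      (Submodule.add_mem _ (gp SP hx0 hr hz0 (by norm_num)) (Submodule.zero_mem _))
      (Submodule.add_mem _ (Submodule.zero_mem _) (Submodule.zero_mem _))

lemma ideal1_of (hKPJ : KP.IsJordanPair) (hVm : Vm011 SP) (hVp : Vp011 SP) :
    KP.IsIdealPair (SP.Qm 1) (SP.Qp 1) := by
  obtain ⟨hLm, hLp⟩ := (li1_iff SP).2 ⟨hVm, hVp⟩
  refine ⟨fun x z y q hq => ⟨hLm x y q hq, ?_⟩, ?_, fun x z y q hq => ⟨hLp x y q hq, ?_⟩, ?_⟩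
  · rw [hKPJ.1 q z y]; exact hLm z y q hq
  · intro x z r hr
    obtain ⟨x0, hx0, x1, hx1, rfl⟩ := decm SP x
    obtain ⟨z0, hz0, z1, hz1, rfl⟩ := decm SP z
    rw [KP.tm_add₁, KP.tm_add₃, KP.tm_add₃]
    have h00 : KP.tm x0 r z0 = 0 := gmz SP hx0 hr hz0 (by norm_num) (by norm_num)
    have h01 : KP.tm x0 r z1 = 0 := hVm x0 hx0 r hr z1 hz1
    have h10 : KP.tm x1 r z0 = 0 := by
      rw [hKPJ.1 x1 z0 r]; exact hVm z0 hz0 r hr x1 hx1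
    rw [h00, h01, h10]
    exact Submodule.add_mem _
      (Submodule.add_mem _ (Submodule.zero_mem _) (Submodule.zero_mem _))
      (Submodule.add_mem _ (Submodule.zero_mem _) (gm SP hx1 hr hz1 (by norm_num)))
  · rw [hKPJ.2 q z y]; exact hLp z y q hq
  · intro x z r hr
    obtain ⟨x0, hx0, x1, hx1, rfl⟩ := decp SP x
    obtain ⟨z0, hz0, z1, hz1, rfl⟩ := decp SP z
    rw [KP.tp_add₁, KP.tp_add₃, KP.tp_add₃]
    have h00 : KP.tp x0 r z0 = 0 := gpz SP hx0 hr hz0 (by norm_num) (by norm_num)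
    have h01 : KP.tp x0 r z1 = 0 := hVp x0 hx0 r hr z1 hz1
    have h10 : KP.tp x1 r z0 = 0 := by
      rw [hKPJ.2 x1 z0 r]; exact hVp z0 hz0 r hr x1 hx1
    rw [h00, h01, h10]
    exact Submodule.add_mem _
      (Submodule.add_mem _ (Submodule.zero_mem _) (Submodule.zero_mem _))
      (Submodule.add_mem _ (Submodule.zero_mem _) (gp SP hx1 hr hz1 (by norm_num)))

lemma memM0 (w : (SP.Qp 0) × (SP.Qm 1)) : w ∈ RefGradM SP 0 ↔ w.2 = 0 := by
  norm_num [RefGradM, Submodule.mem_prod]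

lemma memM1 (w : (SP.Qp 0) × (SP.Qm 1)) : w ∈ RefGradM SP 1 ↔ w.1 = 0 := by
  norm_num [RefGradM, Submodule.mem_prod]

lemma memP0 (w : (SP.Qm 0) × (SP.Qp 1)) : w ∈ RefGradP SP 0 ↔ w.2 = 0 := by
  norm_num [RefGradP, Submodule.mem_prod]

lemma memP1 (w : (SP.Qm 0) × (SP.Qp 1)) : w ∈ RefGradP SP 1 ↔ w.1 = 0 := by
  norm_num [RefGradP, Submodule.mem_prod]

lemma coe_eq_zero_of {M : Type*} [AddCommGroup M] [Module K M] {S : Submodule K M}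
    {w : S} (h : w = 0) : (w : M) = 0 := by rw [h]; simp

lemma refIdeal0 (hrefl : IsReflection KP SP KPc) (hKPJ : KP.IsJordanPair)
    (hVm : Vm100 SP) (hVp : Vp100 SP) :
    KPc.IsIdealPair (RefGradM SP 0) (RefGradP SP 0) := by
  refine ⟨fun x z y q hq => ?_, fun x z r hr => ?_, fun x z y q hq => ?_, fun x z r hr => ?_⟩
  · have hq2 : ((q.2 : Pm)) = 0 := coe_eq_zero_of ((memM0 SP q).1 hq)
    constructor
    · refine (memM0 SP _).2 (ZeroMemClass.coe_eq_zero.1 ?_)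
      rw [(hrefl.2 x q y).2, hq2]
      have e1 : KP.tm (↑x.2) (↑q.1) (↑y.1) = 0 := hVm (↑x.2) x.2.2 (↑q.1) q.1.2 (↑y.1) y.1.2
      have e2 : KP.tm (↑y.1) (↑q.1) (↑x.2) = 0 :=
        (hKPJ.1 (↑y.1) (↑x.2) (↑q.1)).trans e1
      simp [e1, e2, tmz₁, tmz₂, tmz₃]
    · refine (memM0 SP _).2 (ZeroMemClass.coe_eq_zero.1 ?_)
      rw [(hrefl.2 q z y).2, hq2]
      have e1 : KP.tm (↑y.1) (↑q.1) (↑z.2) = 0 :=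
        (hKPJ.1 (↑y.1) (↑z.2) (↑q.1)).trans (hVm (↑z.2) z.2.2 (↑q.1) q.1.2 (↑y.1) y.1.2)
      simp [e1, tmz₁, tmz₂, tmz₃]
  · have hr2 : ((r.2 : Pp)) = 0 := coe_eq_zero_of ((memP0 SP r).1 hr)
    refine (memM0 SP _).2 (ZeroMemClass.coe_eq_zero.1 ?_)
    rw [(hrefl.2 x z r).2, hr2]
    have e1 : KP.tm (↑r.1) (↑x.1) (↑z.2) = 0 :=
      (hKPJ.1 (↑r.1) (↑z.2) (↑x.1)).trans (hVm (↑z.2) z.2.2 (↑x.1) x.1.2 (↑r.1) r.1.2)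
    have e2 : KP.tm (↑x.2) (↑z.1) (↑r.1) = 0 := hVm (↑x.2) x.2.2 (↑z.1) z.1.2 (↑r.1) r.1.2
    have e3 : KP.tm (↑r.1) (↑z.1) (↑x.2) = 0 :=
      (hKPJ.1 (↑r.1) (↑x.2) (↑z.1)).trans e2
    simp [e1, e2, e3, tmz₁, tmz₂, tmz₃]
  · have hq2 : ((q.2 : Pp)) = 0 := coe_eq_zero_of ((memP0 SP q).1 hq)
    constructor
    · refine (memP0 SP _).2 (ZeroMemClass.coe_eq_zero.1 ?_)
      rw [(hrefl.1 x q y).2, hq2]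
      have e1 : KP.tp (↑x.2) (↑q.1) (↑y.1) = 0 := hVp (↑x.2) x.2.2 (↑q.1) q.1.2 (↑y.1) y.1.2
      have e2 : KP.tp (↑y.1) (↑q.1) (↑x.2) = 0 :=
        (hKPJ.2 (↑y.1) (↑x.2) (↑q.1)).trans e1
      simp [e1, e2, tpz₁, tpz₂, tpz₃]
    · refine (memP0 SP _).2 (ZeroMemClass.coe_eq_zero.1 ?_)
      rw [(hrefl.1 q z y).2, hq2]
      have e1 : KP.tp (↑y.1) (↑q.1) (↑z.2) = 0 :=
        (hKPJ.2 (↑y.1) (↑z.2) (↑q.1)).trans (hVp (↑z.2) z.2.2 (↑q.1) q.1.2 (↑y.1) y.1.2)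
      simp [e1, tpz₁, tpz₂, tpz₃]
  · have hr2 : ((r.2 : Pm)) = 0 := coe_eq_zero_of ((memM0 SP r).1 hr)
    refine (memP0 SP _).2 (ZeroMemClass.coe_eq_zero.1 ?_)
    rw [(hrefl.1 x z r).2, hr2]
    have e1 : KP.tp (↑r.1) (↑x.1) (↑z.2) = 0 :=
      (hKPJ.2 (↑r.1) (↑z.2) (↑x.1)).trans (hVp (↑z.2) z.2.2 (↑x.1) x.1.2 (↑r.1) r.1.2)
    have e2 : KP.tp (↑x.2) (↑z.1) (↑r.1) = 0 := hVp (↑x.2) x.2.2 (↑z.1) z.1.2 (↑r.1) r.1.2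
    have e3 : KP.tp (↑r.1) (↑z.1) (↑x.2) = 0 :=
      (hKPJ.2 (↑r.1) (↑x.2) (↑z.1)).trans e2
    simp [e1, e2, e3, tpz₁, tpz₂, tpz₃]

lemma refIdeal1 (hrefl : IsReflection KP SP KPc) (hKPJ : KP.IsJordanPair)
    (hVm : Vm011 SP) (hVp : Vp011 SP) :
    KPc.IsIdealPair (RefGradM SP 1) (RefGradP SP 1) := by
  refine ⟨fun x z y q hq => ?_, fun x z r hr => ?_, fun x z y q hq => ?_, fun x z r hr => ?_⟩
  · have hq1 : ((q.1 : Pp)) = 0 := coe_eq_zero_of ((memM1 SP q).1 hq)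
    constructor
    · refine (memM1 SP _).2 (ZeroMemClass.coe_eq_zero.1 ?_)
      rw [(hrefl.2 x q y).1, hq1]
      have e1 : KP.tp (↑x.1) (↑q.2) (↑y.2) = 0 := hVp (↑x.1) x.1.2 (↑q.2) q.2.2 (↑y.2) y.2.2
      have e2 : KP.tp (↑y.2) (↑q.2) (↑x.1) = 0 :=
        (hKPJ.2 (↑y.2) (↑x.1) (↑q.2)).trans e1
      simp [e1, e2, tpz₁, tpz₂, tpz₃]
    · refine (memM1 SP _).2 (ZeroMemClass.coe_eq_zero.1 ?_)
      rw [(hrefl.2 q z y).1, hq1]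
      have e1 : KP.tp (↑y.2) (↑q.2) (↑z.1) = 0 :=
        (hKPJ.2 (↑y.2) (↑z.1) (↑q.2)).trans (hVp (↑z.1) z.1.2 (↑q.2) q.2.2 (↑y.2) y.2.2)
      simp [e1, tpz₁, tpz₂, tpz₃]
  · have hr1 : ((r.1 : Pm)) = 0 := coe_eq_zero_of ((memP1 SP r).1 hr)
    refine (memM1 SP _).2 (ZeroMemClass.coe_eq_zero.1 ?_)
    rw [(hrefl.2 x z r).1, hr1]
    have e1 : KP.tp (↑r.2) (↑x.2) (↑z.1) = 0 :=
      (hKPJ.2 (↑r.2) (↑z.1) (↑x.2)).trans (hVp (↑z.1) z.1.2 (↑x.2) x.2.2 (↑r.2) r.2.2)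
    have e2 : KP.tp (↑x.1) (↑z.2) (↑r.2) = 0 := hVp (↑x.1) x.1.2 (↑z.2) z.2.2 (↑r.2) r.2.2
    have e3 : KP.tp (↑r.2) (↑z.2) (↑x.1) = 0 :=
      (hKPJ.2 (↑r.2) (↑x.1) (↑z.2)).trans e2
    simp [e1, e2, e3, tpz₁, tpz₂, tpz₃]
  · have hq1 : ((q.1 : Pm)) = 0 := coe_eq_zero_of ((memP1 SP q).1 hq)
    constructor
    · refine (memP1 SP _).2 (ZeroMemClass.coe_eq_zero.1 ?_)
      rw [(hrefl.1 x q y).1, hq1]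
      have e1 : KP.tm (↑x.1) (↑q.2) (↑y.2) = 0 := hVm (↑x.1) x.1.2 (↑q.2) q.2.2 (↑y.2) y.2.2
      have e2 : KP.tm (↑y.2) (↑q.2) (↑x.1) = 0 :=
        (hKPJ.1 (↑y.2) (↑x.1) (↑q.2)).trans e1
      simp [e1, e2, tmz₁, tmz₂, tmz₃]
    · refine (memP1 SP _).2 (ZeroMemClass.coe_eq_zero.1 ?_)
      rw [(hrefl.1 q z y).1, hq1]
      have e1 : KP.tm (↑y.2) (↑q.2) (↑z.1) = 0 :=
        (hKPJ.1 (↑y.2) (↑z.1) (↑q.2)).trans (hVm (↑z.1) z.1.2 (↑q.2) q.2.2 (↑y.2) y.2.2)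
      simp [e1, tmz₁, tmz₂, tmz₃]
  · have hr1 : ((r.1 : Pp)) = 0 := coe_eq_zero_of ((memM1 SP r).1 hr)
    refine (memP1 SP _).2 (ZeroMemClass.coe_eq_zero.1 ?_)
    rw [(hrefl.1 x z r).1, hr1]
    have e1 : KP.tm (↑r.2) (↑x.2) (↑z.1) = 0 :=
      (hKPJ.1 (↑r.2) (↑z.1) (↑x.2)).trans (hVm (↑z.1) z.1.2 (↑x.2) x.2.2 (↑r.2) r.2.2)
    have e2 : KP.tm (↑x.1) (↑z.2) (↑r.2) = 0 := hVm (↑x.1) x.1.2 (↑z.2) z.2.2 (↑r.2) r.2.2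
    have e3 : KP.tm (↑r.2) (↑z.2) (↑x.1) = 0 :=
      (hKPJ.1 (↑r.2) (↑x.1) (↑z.2)).trans e2
    simp [e1, e2, e3, tmz₁, tmz₂, tmz₃]

end S13aux
/-- Let `P` be an SP-graded Kantor pair and `P̌` its reflection.  Then
`P̌` is a Jordan pair iff `P₀` and `P₁` are left ideals of `P` which are Jordan pairs.
If moreover `P` is Jordan, then `P̌` is Jordan iff `P₀` and `P₁` are ideals of `P`, in
which case `P = P₀ ⊕ P₁` and `P̌ = (P₀)^op ⊕ P₁` are direct sums of ideals. -/
theorem statement13 {K : Type*} [CommRing K] (h6 : IsUnit (6 : K))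
    {Pm Pp : Type*} [AddCommGroup Pm] [AddCommGroup Pp] [Module K Pm] [Module K Pp]
    (KP : KantorPair K Pm Pp) (SP : SPGrading KP)
    (KPc : KantorPair K ((SP.Qp 0) × (SP.Qm 1)) ((SP.Qm 0) × (SP.Qp 1)))
    (hrefl : IsReflection KP SP KPc) :
    (KPc.IsJordanPair ↔
      (IsLeftIdealPair KP (SP.Qm 0) (SP.Qp 0) ∧ IsLeftIdealPair KP (SP.Qm 1) (SP.Qp 1) ∧
       IsJordanSubpair KP (SP.Qm 0) (SP.Qp 0) ∧ IsJordanSubpair KP (SP.Qm 1) (SP.Qp 1))) ∧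
    (KP.IsJordanPair →
      (KPc.IsJordanPair ↔
        (KP.IsIdealPair (SP.Qm 0) (SP.Qp 0) ∧ KP.IsIdealPair (SP.Qm 1) (SP.Qp 1))) ∧
      (KPc.IsJordanPair →
        -- P = P₀ ⊕ P₁ is a direct sum of ideals ...
        KP.IsIdealPair (SP.Qm 0) (SP.Qp 0) ∧ KP.IsIdealPair (SP.Qm 1) (SP.Qp 1) ∧
        -- ... and P̌ = (P₀)^op ⊕ P₁ is a direct sum of ideals
        KPc.IsIdealPair (RefGradM SP 0) (RefGradP SP 0) ∧
        KPc.IsIdealPair (RefGradM SP 1) (RefGradP SP 1))) := by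
  constructor
  · rw [S13aux.jordan_iff SP KPc hrefl, S13aux.li0_iff SP, S13aux.li1_iff SP]
    tauto
  · intro hKPJ
    constructor
    · constructor
      · intro hJc
        obtain ⟨hVm100, hVp100, hVm011, hVp011, _, _⟩ :=
          (S13aux.jordan_iff SP KPc hrefl).1 hJc
        exact ⟨S13aux.ideal0_of SP hKPJ hVm100 hVp100,
               S13aux.ideal1_of SP hKPJ hVm011 hVp011⟩
      · rintro ⟨hI0, hI1⟩
        refine (S13aux.jordan_iff SP KPc hrefl).2 ⟨?_, ?_, ?_, ?_, ?_, ?_⟩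
        · intro x hx y hy z hz
          exact S13aux.djm SP ((hI0.1 x 0 y z hz).1) (S13aux.gm SP hx hy hz (t := 1) (ht := by norm_num))
        · intro x hx y hy z hz
          exact S13aux.djp SP ((hI0.2.2.1 x 0 y z hz).1) (S13aux.gp SP hx hy hz (t := 1) (ht := by norm_num))
        · intro x hx y hy z hz
          exact S13aux.djm SP (S13aux.gm SP hx hy hz (t := 0) (ht := by norm_num)) ((hI1.1 x 0 y z hz).1)
        · intro x hx y hy z hz
          exact S13aux.djp SP (S13aux.gp SP hx hy hz (t := 0) (ht := by norm_num)) ((hI1.2.2.1 x 0 y z hz).1)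
        · exact ⟨fun x z y _ _ _ => hKPJ.1 x z y, fun x z y _ _ _ => hKPJ.2 x z y⟩
        · exact ⟨fun x z y _ _ _ => hKPJ.1 x z y, fun x z y _ _ _ => hKPJ.2 x z y⟩
    · intro hJc
      obtain ⟨hVm100, hVp100, hVm011, hVp011, _, _⟩ :=
        (S13aux.jordan_iff SP KPc hrefl).1 hJc
      exact ⟨S13aux.ideal0_of SP hKPJ hVm100 hVp100,
             S13aux.ideal1_of SP hKPJ hVm011 hVp011,
             S13aux.refIdeal0 SP KPc hrefl hKPJ hVm100 hVp100,
             S13aux.refIdeal1 SP KPc hrefl hKPJ hVm011 hVp011⟩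
end

section
/- Suppose P is a simple Jordan pair over 𝕂 equipped with a non-trivial SP-grading (i.e. P₀ ≠ 0 and P₁ ≠ 0). Then the reflection P̌ of P is not a Jordan pair. -/
/-- If `P` is a simple Jordan pair equipped with a non-trivial
SP-grading (`P₀ ≠ 0` and `P₁ ≠ 0`), then its reflection `P̌` is not a Jordan pair. -/
theorem statement14 {K : Type*} [CommRing K] (h6 : IsUnit (6 : K))
    {Pm Pp : Type*} [AddCommGroup Pm] [AddCommGroup Pp] [Module K Pm] [Module K Pp]
    (KP : KantorPair K Pm Pp) (SP : SPGrading KP)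
    (hJordan : KP.IsJordanPair) (hsimple : KP.IsSimplePair)
    (h0 : SP.Qm 0 ≠ ⊥ ∨ SP.Qp 0 ≠ ⊥) (h1 : SP.Qm 1 ≠ ⊥ ∨ SP.Qp 1 ≠ ⊥)
    (KPc : KantorPair K ((SP.Qp 0) × (SP.Qm 1)) ((SP.Qm 0) × (SP.Qp 1)))
    (hrefl : IsReflection KP SP KPc) :
    ¬ KPc.IsJordanPair := by
  intro hJc
  -- zero lemmas for the trilinear products
  have tmz1 : ∀ (y : Pp) (z : Pm), KP.tm 0 y z = 0 := fun y z => by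
    simpa using KP.tm_smul₁ (0:K) 0 y z
  have tmz2 : ∀ (x z : Pm), KP.tm x 0 z = 0 := fun x z => by
    simpa using KP.tm_smul₂ (0:K) x 0 z
  have tmz3 : ∀ (x : Pm) (y : Pp), KP.tm x y 0 = 0 := fun x y => by
    simpa using KP.tm_smul₃ (0:K) x y 0
  have tpz1 : ∀ (y : Pm) (z : Pp), KP.tp 0 y z = 0 := fun y z => by
    simpa using KP.tp_smul₁ (0:K) 0 y z
  have tpz2 : ∀ (x z : Pp), KP.tp x 0 z = 0 := fun x z => by
    simpa using KP.tp_smul₂ (0:K) x 0 z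
  have tpz3 : ∀ (x : Pp) (y : Pm), KP.tp x y 0 = 0 := fun x y => by
    simpa using KP.tp_smul₃ (0:K) x y 0
  -- Z1 : {Qm0, Qp1, Qm1} = 0
  have Z1 : ∀ a1 ∈ SP.Qm 0, ∀ c2 ∈ SP.Qp 1, ∀ b2 ∈ SP.Qm 1, KP.tm a1 c2 b2 = 0 := by
    intro a1 ha1 c2 hc2 b2 hb2
    have e1 := (hrefl.1 (⟨a1, ha1⟩, 0) (0, ⟨c2, hc2⟩) (0, ⟨b2, hb2⟩)).1
    have e2 := (hrefl.1 (0, ⟨c2, hc2⟩) (⟨a1, ha1⟩, 0) (0, ⟨b2, hb2⟩)).1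
    rw [hJc.2 (⟨a1, ha1⟩, 0) (0, ⟨c2, hc2⟩) (0, ⟨b2, hb2⟩), e2] at e1
    simp only [ZeroMemClass.coe_zero, Submodule.coe_zero, tmz1, tmz2, tmz3,
      zero_sub, sub_zero, zero_add, add_zero, zero_mem] at e1
    have e := e1.symm
    rwa [sub_eq_iff_eq_add, neg_add_cancel] at e
  -- Z2 : {Qp1, Qm0, Qp0} = 0
  have Z2 : ∀ a2 ∈ SP.Qp 1, ∀ c1 ∈ SP.Qm 0, ∀ b1 ∈ SP.Qp 0, KP.tp a2 c1 b1 = 0 := by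
    intro a2 ha2 c1 hc1 b1 hb1
    have e1 := (hrefl.1 (0, ⟨a2, ha2⟩) (⟨c1, hc1⟩, 0) (⟨b1, hb1⟩, 0)).2
    have e2 := (hrefl.1 (⟨c1, hc1⟩, 0) (0, ⟨a2, ha2⟩) (⟨b1, hb1⟩, 0)).2
    rw [hJc.2 (0, ⟨a2, ha2⟩) (⟨c1, hc1⟩, 0) (⟨b1, hb1⟩, 0), e2] at e1
    simp only [ZeroMemClass.coe_zero, Submodule.coe_zero, tpz1, tpz2, tpz3,
      zero_sub, sub_zero, zero_add, add_zero, zero_mem] at e1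
    have e := e1.symm
    rwa [sub_eq_iff_eq_add, neg_add_cancel] at e
  -- Z3 : {Qp0, Qm1, Qp1} = 0
  have Z3 : ∀ a1 ∈ SP.Qp 0, ∀ c2 ∈ SP.Qm 1, ∀ b2 ∈ SP.Qp 1, KP.tp a1 c2 b2 = 0 := by
    intro a1 ha1 c2 hc2 b2 hb2
    have e1 := (hrefl.2 (⟨a1, ha1⟩, 0) (0, ⟨c2, hc2⟩) (0, ⟨b2, hb2⟩)).1
    have e2 := (hrefl.2 (0, ⟨c2, hc2⟩) (⟨a1, ha1⟩, 0) (0, ⟨b2, hb2⟩)).1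
    rw [hJc.1 (⟨a1, ha1⟩, 0) (0, ⟨c2, hc2⟩) (0, ⟨b2, hb2⟩), e2] at e1
    simp only [ZeroMemClass.coe_zero, Submodule.coe_zero, tpz1, tpz2, tpz3,
      zero_sub, sub_zero, zero_add, add_zero, zero_mem] at e1
    have e := e1.symm
    rwa [sub_eq_iff_eq_add, neg_add_cancel] at e
  -- Z4 : {Qm1, Qp0, Qm0} = 0
  have Z4 : ∀ a2 ∈ SP.Qm 1, ∀ c1 ∈ SP.Qp 0, ∀ b1 ∈ SP.Qm 0, KP.tm a2 c1 b1 = 0 := by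
    intro a2 ha2 c1 hc1 b1 hb1
    have e1 := (hrefl.2 (0, ⟨a2, ha2⟩) (⟨c1, hc1⟩, 0) (⟨b1, hb1⟩, 0)).2
    have e2 := (hrefl.2 (⟨c1, hc1⟩, 0) (0, ⟨a2, ha2⟩) (⟨b1, hb1⟩, 0)).2
    rw [hJc.1 (0, ⟨a2, ha2⟩) (⟨c1, hc1⟩, 0) (⟨b1, hb1⟩, 0), e2] at e1
    simp only [ZeroMemClass.coe_zero, Submodule.coe_zero, tmz1, tmz2, tmz3,
      zero_sub, sub_zero, zero_add, add_zero, zero_mem] at e1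
    have e := e1.symm
    rwa [sub_eq_iff_eq_add, neg_add_cancel] at e
  -- Jordan-symmetric versions
  have Z1' : ∀ a1 ∈ SP.Qm 1, ∀ c2 ∈ SP.Qp 1, ∀ b2 ∈ SP.Qm 0, KP.tm a1 c2 b2 = 0 := by
    intro a1 ha1 c2 hc2 b2 hb2
    rw [hJordan.1]; exact Z1 b2 hb2 c2 hc2 a1 ha1
  have Z2' : ∀ a2 ∈ SP.Qp 0, ∀ c1 ∈ SP.Qm 0, ∀ b1 ∈ SP.Qp 1, KP.tp a2 c1 b1 = 0 := by
    intro a2 ha2 c1 hc1 b1 hb1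
    rw [hJordan.2]; exact Z2 b1 hb1 c1 hc1 a2 ha2
  have Z3' : ∀ a1 ∈ SP.Qp 1, ∀ c2 ∈ SP.Qm 1, ∀ b2 ∈ SP.Qp 0, KP.tp a1 c2 b2 = 0 := by
    intro a1 ha1 c2 hc2 b2 hb2
    rw [hJordan.2]; exact Z3 b2 hb2 c2 hc2 a1 ha1
  have Z4' : ∀ a2 ∈ SP.Qm 0, ∀ c1 ∈ SP.Qp 0, ∀ b1 ∈ SP.Qm 1, KP.tm a2 c1 b1 = 0 := by
    intro a2 ha2 c1 hc1 b1 hb1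
    rw [hJordan.1]; exact Z4 b1 hb1 c1 hc1 a2 ha2
  -- vanishing of products by grading degree
  have Gm : ∀ (i j k : ℤ), i - j + k ≠ 0 → i - j + k ≠ 1 →
      ∀ x ∈ SP.Qm i, ∀ y ∈ SP.Qp j, ∀ z ∈ SP.Qm k, KP.tm x y z = 0 := by
    intro i j k hne0 hne1 x hx y hy z hz
    have h := SP.grade_m i j k x y z hx hy hz
    rwa [SP.vanish_m _ hne0 hne1, Submodule.mem_bot] at h
  have Gp : ∀ (i j k : ℤ), i - j + k ≠ 0 → i - j + k ≠ 1 →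
      ∀ x ∈ SP.Qp i, ∀ y ∈ SP.Qm j, ∀ z ∈ SP.Qp k, KP.tp x y z = 0 := by
    intro i j k hne0 hne1 x hx y hy z hz
    have h := SP.grade_p i j k x y z hx hy hz
    rwa [SP.vanish_p _ hne0 hne1, Submodule.mem_bot] at h
  -- decomposition of arbitrary elements
  have decm : ∀ x : Pm, ∃ x0 ∈ SP.Qm 0, ∃ x1 ∈ SP.Qm 1, x = x0 + x1 := by
    intro x
    have hx : x ∈ SP.Qm 0 ⊔ SP.Qm 1 := by rw [SP.sup_m]; trivial
    obtain ⟨x0, hx0, x1, hx1, h⟩ := Submodule.mem_sup.mp hx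
    exact ⟨x0, hx0, x1, hx1, h.symm⟩
  have decp : ∀ y : Pp, ∃ y0 ∈ SP.Qp 0, ∃ y1 ∈ SP.Qp 1, y = y0 + y1 := by
    intro y
    have hy : y ∈ SP.Qp 0 ⊔ SP.Qp 1 := by rw [SP.sup_p]; trivial
    obtain ⟨y0, hy0, y1, hy1, h⟩ := Submodule.mem_sup.mp hy
    exact ⟨y0, hy0, y1, hy1, h.symm⟩
  -- key: all products with an entry in degree 1 land in degree 1
  have keym : ∀ (x : Pm) (y : Pp) (z : Pm),
      (x ∈ SP.Qm 1 ∨ y ∈ SP.Qp 1 ∨ z ∈ SP.Qm 1) → KP.tm x y z ∈ SP.Qm 1 := by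
    intro x y z hcase
    have g111 : ∀ x ∈ SP.Qm 1, ∀ y ∈ SP.Qp 1, ∀ z ∈ SP.Qm 1, KP.tm x y z ∈ SP.Qm 1 := by
      intro x hx y hy z hz
      have h := SP.grade_m 1 1 1 x y z hx hy hz
      rwa [show (1:ℤ) - 1 + 1 = 1 by norm_num] at h
    rcases hcase with hx | hy | hz
    · obtain ⟨y0, hy0, y1, hy1, rfl⟩ := decp y
      obtain ⟨z0, hz0, z1, hz1, rfl⟩ := decm z
      rw [KP.tm_add₂, KP.tm_add₃, KP.tm_add₃]
      refine add_mem (add_mem ?_ ?_) (add_mem ?_ ?_)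
      · rw [Z4 x hx y0 hy0 z0 hz0]; exact zero_mem _
      · rw [Gm 1 0 1 (by norm_num) (by norm_num) x hx y0 hy0 z1 hz1]; exact zero_mem _
      · rw [Z1' x hx y1 hy1 z0 hz0]; exact zero_mem _
      · exact g111 x hx y1 hy1 z1 hz1
    · obtain ⟨x0, hx0, x1, hx1, rfl⟩ := decm x
      obtain ⟨z0, hz0, z1, hz1, rfl⟩ := decm z
      rw [KP.tm_add₁, KP.tm_add₃, KP.tm_add₃]
      refine add_mem (add_mem ?_ ?_) (add_mem ?_ ?_)
      · rw [Gm 0 1 0 (by norm_num) (by norm_num) x0 hx0 y hy z0 hz0]; exact zero_mem _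
      · rw [Z1 x0 hx0 y hy z1 hz1]; exact zero_mem _
      · rw [Z1' x1 hx1 y hy z0 hz0]; exact zero_mem _
      · exact g111 x1 hx1 y hy z1 hz1
    · obtain ⟨x0, hx0, x1, hx1, rfl⟩ := decm x
      obtain ⟨y0, hy0, y1, hy1, rfl⟩ := decp y
      rw [KP.tm_add₁, KP.tm_add₂, KP.tm_add₂]
      refine add_mem (add_mem ?_ ?_) (add_mem ?_ ?_)
      · rw [Z4' x0 hx0 y0 hy0 z hz]; exact zero_mem _
      · rw [Z1 x0 hx0 y1 hy1 z hz]; exact zero_mem _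
      · rw [Gm 1 0 1 (by norm_num) (by norm_num) x1 hx1 y0 hy0 z hz]; exact zero_mem _
      · exact g111 x1 hx1 y1 hy1 z hz
  have keyp : ∀ (x : Pp) (y : Pm) (z : Pp),
      (x ∈ SP.Qp 1 ∨ y ∈ SP.Qm 1 ∨ z ∈ SP.Qp 1) → KP.tp x y z ∈ SP.Qp 1 := by
    intro x y z hcase
    have g111 : ∀ x ∈ SP.Qp 1, ∀ y ∈ SP.Qm 1, ∀ z ∈ SP.Qp 1, KP.tp x y z ∈ SP.Qp 1 := by
      intro x hx y hy z hz
      have h := SP.grade_p 1 1 1 x y z hx hy hz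
      rwa [show (1:ℤ) - 1 + 1 = 1 by norm_num] at h
    rcases hcase with hx | hy | hz
    · obtain ⟨y0, hy0, y1, hy1, rfl⟩ := decm y
      obtain ⟨z0, hz0, z1, hz1, rfl⟩ := decp z
      rw [KP.tp_add₂, KP.tp_add₃, KP.tp_add₃]
      refine add_mem (add_mem ?_ ?_) (add_mem ?_ ?_)
      · rw [Z2 x hx y0 hy0 z0 hz0]; exact zero_mem _
      · rw [Gp 1 0 1 (by norm_num) (by norm_num) x hx y0 hy0 z1 hz1]; exact zero_mem _
      · rw [Z3' x hx y1 hy1 z0 hz0]; exact zero_mem _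
      · exact g111 x hx y1 hy1 z1 hz1
    · obtain ⟨x0, hx0, x1, hx1, rfl⟩ := decp x
      obtain ⟨z0, hz0, z1, hz1, rfl⟩ := decp z
      rw [KP.tp_add₁, KP.tp_add₃, KP.tp_add₃]
      refine add_mem (add_mem ?_ ?_) (add_mem ?_ ?_)
      · rw [Gp 0 1 0 (by norm_num) (by norm_num) x0 hx0 y hy z0 hz0]; exact zero_mem _
      · rw [Z3 x0 hx0 y hy z1 hz1]; exact zero_mem _
      · rw [Z3' x1 hx1 y hy z0 hz0]; exact zero_mem _
      · exact g111 x1 hx1 y hy z1 hz1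
    · obtain ⟨x0, hx0, x1, hx1, rfl⟩ := decp x
      obtain ⟨y0, hy0, y1, hy1, rfl⟩ := decm y
      rw [KP.tp_add₁, KP.tp_add₂, KP.tp_add₂]
      refine add_mem (add_mem ?_ ?_) (add_mem ?_ ?_)
      · rw [Z2' x0 hx0 y0 hy0 z hz]; exact zero_mem _
      · rw [Z3 x0 hx0 y1 hy1 z hz]; exact zero_mem _
      · rw [Gp 1 0 1 (by norm_num) (by norm_num) x1 hx1 y0 hy0 z hz]; exact zero_mem _
      · exact g111 x1 hx1 y1 hy1 z hz
  -- (Qm 1, Qp 1) is an ideal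
  have hideal : KP.IsIdealPair (SP.Qm 1) (SP.Qp 1) := by
    refine ⟨fun x z y q hq => ⟨keym x y q (Or.inr (Or.inr hq)), keym q y z (Or.inl hq)⟩,
      fun x z r hr => keym x r z (Or.inr (Or.inl hr)),
      fun x z y q hq => ⟨keyp x y q (Or.inr (Or.inr hq)), keyp q y z (Or.inl hq)⟩,
      fun x z r hr => keyp x r z (Or.inr (Or.inl hr))⟩
  rcases hsimple.2 _ _ hideal with ⟨hm, hp⟩ | ⟨hm, hp⟩
  · rcases h1 with h | h
    · exact h hm
    · exact h hp
  · have dm := SP.disj_m; rw [hm] at dm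
    have dp := SP.disj_p; rw [hp] at dp
    rcases h0 with h | h
    · exact h (disjoint_top.mp dm)
    · exact h (disjoint_top.mp dp)
end
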